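/- For every $n\ge2$ there exist an enumeration $(x^n_i)_{i=1}^{i(n)}$ of $M_n\setminus D_{n-1}$ and, for every $i\in\{0,\dots,i(n)-1\}$, a retraction $\Psi_{n,i}:M_n\to D_{n-1}\cup\{x^n_1,\dots,x^n_i\}$ such that: (1) $\Psi_{n,i_1}\circ\Psi_{n,i_2}=\Psi_{n,\min(i_1,i_2)}$ for all $i_1,i_2\in\{0,\dots,i(n)-1\}$; (2) $\Psi_{n,0}=\Psi_n$; (3) every $\Psi_{n,i}$ is $K$-Lipschitz with $K=(3\lambda+2)(3\lambda^2+6\lambda+11)$, a constant independent of $i$ and $n$. -/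

import Mathlib

open Set

noncomputable section

variable {Γ : Type*} [TopologicalSpace Γ] [DiscreteTopology Γ]

/-- `ℓ∞(Γ)`: the Banach space of bounded real functions on `Γ`
(carrying the discrete topology, so that boundedness is the only constraint). -/
abbrev Linf (Γ : Type*) [TopologicalSpace Γ] [DiscreteTopology Γ] : Type _ :=
  BoundedContinuousFunction Γ ℝ

/-- The entire part of a real number, toward `0`: `[r] = sign(r)⌊|r|⌋`. -/
def ent (r : ℝ) : ℝ := Real.sign r * ⌊|r|⌋

lemma abs_ent_le (r : ℝ) : |ent r| ≤ |r| := by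
  have hsign : |Real.sign r| ≤ 1 := by
    rcases lt_trichotomy r 0 with h | h | h
    · rw [Real.sign_of_neg h]; norm_num
    · rw [h, Real.sign_zero]; norm_num
    · rw [Real.sign_of_pos h]; norm_num
  have hfl : |(⌊|r|⌋ : ℝ)| ≤ |r| := by
    rw [abs_of_nonneg (by exact_mod_cast Int.floor_nonneg.mpr (abs_nonneg r))]
    exact Int.floor_le _
  calc |ent r| = |Real.sign r| * |(⌊|r|⌋ : ℝ)| := abs_mul _ _
    _ ≤ 1 * |r| := mul_le_mul hsign hfl (abs_nonneg _) zero_le_one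
    _ = |r| := one_mul _

/-- The coordinatewise quantization `f : ℓ∞(S) → ℓ∞(S)`, `f(x)(γ) = [x(γ)]`. -/
def quant (x : Linf Γ) : Linf Γ :=
  BoundedContinuousFunction.ofNormedAddCommGroup (fun γ => ent (x γ))
    continuous_of_discreteTopology ‖x‖ (fun γ => by
      rw [Real.norm_eq_abs]
      exact (abs_ent_le (x γ)).trans (by simpa using x.norm_coe_le_norm γ))

/-- Scalar truncation at level `s`. -/
def truncFun (s t : ℝ) : ℝ := if |t| ≤ s then t else s * t / |t|

lemma abs_truncFun_le (s t : ℝ) : |truncFun s t| ≤ max |s| |t| := by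
  unfold truncFun
  split_ifs with h
  · exact le_max_right _ _
  · by_cases ht : t = 0
    · simp [ht]
    · have hst : abs (s * t / |t|) = |s| := by
        rw [abs_div, abs_mul, abs_abs, mul_div_assoc, div_self (abs_ne_zero.mpr ht), mul_one]
      rw [hst]; exact le_max_left _ _

/-- The truncation of radius `s`: `T_s(x)(γ) = x(γ)` if `|x(γ)| ≤ s`,
and `= s·x(γ)/|x(γ)|` otherwise. -/
def trunc (s : ℝ) (x : Linf Γ) : Linf Γ :=
  BoundedContinuousFunction.ofNormedAddCommGroup (fun γ => truncFun s (x γ))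
    continuous_of_discreteTopology (max |s| ‖x‖) (fun γ => by
      rw [Real.norm_eq_abs]
      exact (abs_truncFun_le s (x γ)).trans
        (max_le_max le_rfl (by simpa using x.norm_coe_le_norm γ)))

/-- The restriction operator `r_S : ℓ∞(Γ) → ℓ∞(S)`, where `ℓ∞(S)` is identified
isometrically with the subspace of `ℓ∞(Γ)` of functions vanishing off `S`. -/
def restr (S : Set Γ) (x : Linf Γ) : Linf Γ :=
  BoundedContinuousFunction.ofNormedAddCommGroup (S.indicator x)
    continuous_of_discreteTopology ‖x‖ (fun γ => by
      rw [Real.norm_eq_abs]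
      by_cases h : γ ∈ S
      · rw [Set.indicator_of_mem h]
        simpa using x.norm_coe_le_norm γ
      · rw [Set.indicator_of_notMem h]
        simp)

/-- The ball `s·B_{ℓ∞(S)}`, viewed inside `ℓ∞(Γ)`: functions supported on `S`
of norm at most `s`. -/
def suppBall (S : Set Γ) (s : ℝ) : Set (Linf Γ) :=
  {x | (∀ γ ∉ S, x γ = 0) ∧ ‖x‖ ≤ s}

/-- `chain T a b = T (a+1) ∘ ⋯ ∘ T b` (the identity if `b ≤ a`). -/
def chain {α : Type*} (T : ℕ → α → α) (a b : ℕ) : α → α :=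
  Nat.rec id (fun k ih => ih ∘ T (a + k + 1)) (b - a)

/-- Bourgain–Delbaen data on `Γ`: a strictly increasing sequence of nonempty finite
sets `Γs n` (for `n ≥ 1`) with union `Γ`, together with compatible bounded linear
extension operators `i n : ℓ∞(Γ_n) → ℓ∞(Γ)` (realized as operators on `ℓ∞(Γ)`
factoring through the restriction `restr (Γs n)`), with norms bounded by the
positive integer `lam`. -/
structure BD (Γ : Type*) [TopologicalSpace Γ] [DiscreteTopology Γ] where
  Γs : ℕ → Set Γ
  lam : ℕ
  i : ℕ → Linf Γ →L[ℝ] Linf Γ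
  one_le_lam : 1 ≤ lam
  finite : ∀ n, 1 ≤ n → (Γs n).Finite
  nonempty : ∀ n, 1 ≤ n → (Γs n).Nonempty
  ssubset : ∀ n, 1 ≤ n → Γs n ⊂ Γs (n + 1)
  iUnion_eq : ⋃ n ∈ {k : ℕ | 1 ≤ k}, Γs n = Set.univ
  extension : ∀ n, 1 ≤ n → ∀ x : Linf Γ, ∀ γ ∈ Γs n, i n x γ = x γ
  factor : ∀ n, 1 ≤ n → ∀ x : Linf Γ, i n (restr (Γs n) x) = i n x
  compatible : ∀ n m, 1 ≤ n → n < m → ∀ x : Linf Γ, i m (restr (Γs m) (i n x)) = i n x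
  norm_i_le : ∀ n, 1 ≤ n → ‖i n‖ ≤ (lam : ℝ)

namespace BD

/-- `s n = λ^n`. -/
def s (B : BD Γ) (n : ℕ) : ℝ := (B.lam : ℝ) ^ n

/-- The sets `M_n` (with `M_0 = ∅`):
`M_n = M_{n-1} ∪ (f ∘ i_n)(f(s_n B_{ℓ∞(Γ_n)}) \ r_n(M_{n-1}))`. -/
def M (B : BD Γ) : ℕ → Set (Linf Γ)
  | 0 => ∅
  | n + 1 =>
      M B n ∪
        (fun z => quant (B.i (n + 1) z)) ''
          (quant '' suppBall (B.Γs (n + 1)) (B.s (n + 1)) \ restr (B.Γs (n + 1)) '' M B n)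

/-- `M = ⋃ n, M_n`. -/
def Mtot (B : BD Γ) : Set (Linf Γ) := ⋃ n, B.M n

/-- `C_n = (f ∘ i_{n+1} ∘ f ∘ T_{s_{n+1}} ∘ r_{n+1} ∘ i_n)
(f(s_{n+1}B_{ℓ∞(Γ_n)}) \ f(s_n B_{ℓ∞(Γ_n)}))`. -/
def C (B : BD Γ) (n : ℕ) : Set (Linf Γ) :=
  (fun z => quant (B.i (n + 1) (quant (trunc (B.s (n + 1)) (restr (B.Γs (n + 1)) (B.i n z)))))) ''
    (quant '' suppBall (B.Γs n) (B.s (n + 1)) \ quant '' suppBall (B.Γs n) (B.s n))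

/-- `D_n = M_n ∪ C_n`. -/
def D (B : BD Γ) (n : ℕ) : Set (Linf Γ) := B.M n ∪ B.C n

end BD
section Step3Aux

variable {Γ : Type*} [TopologicalSpace Γ] [DiscreteTopology Γ]

/-! ### Pointwise API for quant, restr, trunc -/

@[simp] lemma quant_apply (x : Linf Γ) (γ : Γ) : quant x γ = ent (x γ) := rfl

@[simp] lemma restr_apply (S : Set Γ) (x : Linf Γ) (γ : Γ) :
    restr S x γ = S.indicator x γ := rfl

lemma restr_apply_mem {S : Set Γ} (x : Linf Γ) {γ : Γ} (hγ : γ ∈ S) :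
    restr S x γ = x γ := Set.indicator_of_mem hγ x

lemma restr_apply_not_mem {S : Set Γ} (x : Linf Γ) {γ : Γ} (hγ : γ ∉ S) :
    restr S x γ = 0 := Set.indicator_of_notMem hγ x

@[simp] lemma trunc_apply (s : ℝ) (x : Linf Γ) (γ : Γ) :
    trunc s x γ = truncFun s (x γ) := rfl

/-! ### Scalar lemmas about `ent` -/

lemma ent_intCast (k : ℤ) : ent (k : ℝ) = k := by
  unfold ent
  rcases lt_trichotomy (k : ℝ) 0 with h | h | h
  · rw [Real.sign_of_neg h, abs_of_neg h, ← Int.cast_neg, Int.floor_intCast]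
    push_cast; ring
  · simp [h, Real.sign_zero]
  · rw [Real.sign_of_pos h, abs_of_pos h, Int.floor_intCast, one_mul]

lemma ent_isInt (r : ℝ) : ∃ k : ℤ, ent r = k := by
  unfold ent
  rcases lt_trichotomy r 0 with h | h | h
  · exact ⟨-⌊|r|⌋, by rw [Real.sign_of_neg h]; push_cast; ring⟩
  · exact ⟨0, by simp [h, Real.sign_zero]⟩
  · exact ⟨⌊|r|⌋, by rw [Real.sign_of_pos h, one_mul]⟩

lemma abs_ent_sub_le (r : ℝ) : |ent r - r| ≤ 1 := by
  unfold ent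
  rcases lt_trichotomy r 0 with h | h | h
  · rw [Real.sign_of_neg h, abs_of_neg h]
    have h1 : (⌊-r⌋ : ℝ) ≤ -r := Int.floor_le _
    have h2 : -r < ⌊-r⌋ + 1 := Int.lt_floor_add_one _
    rw [abs_le]; constructor <;> nlinarith
  · simp [h, Real.sign_zero]
  · rw [Real.sign_of_pos h, abs_of_pos h, one_mul]
    have h1 : (⌊r⌋ : ℝ) ≤ r := Int.floor_le _
    have h2 : r < ⌊r⌋ + 1 := Int.lt_floor_add_one _
    rw [abs_le]; constructor <;> nlinarith

lemma abs_ent_sub_ent_le (a b : ℝ) : |ent a - ent b| ≤ |a - b| + 2 := by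
  have h1 := abs_ent_sub_le a
  have h2 := abs_ent_sub_le b
  have : ent a - ent b = (ent a - a) - (ent b - b) + (a - b) := by ring
  rw [this]
  calc |(ent a - a) - (ent b - b) + (a - b)|
      ≤ |(ent a - a) - (ent b - b)| + |a - b| := abs_add_le _ _
    _ ≤ (|ent a - a| + |ent b - b|) + |a - b| := by
        gcongr; exact abs_sub _ _
    _ ≤ |a - b| + 2 := by linarith [abs_nonneg (a-b)]

/-! ### truncFun as clamp -/

lemma truncFun_eq_clamp {s : ℝ} (hs : 0 ≤ s) (t : ℝ) :
    truncFun s t = max (-s) (min s t) := by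
  unfold truncFun
  split_ifs with h
  · rw [abs_le] at h
    rw [min_eq_right h.2, max_eq_right h.1]
  · push_neg at h
    rcases le_or_gt t 0 with ht | ht
    · have hts : t < -s := by
        rcases abs_cases t with ⟨he, _⟩ | ⟨he, _⟩
        · nlinarith
        · nlinarith
      have htne : t ≠ 0 := by nlinarith
      rw [abs_of_nonpos ht, min_eq_right (by nlinarith), max_eq_left (by nlinarith),
        div_neg, mul_div_assoc, div_self htne, mul_one]
    · have hts : s < t := by
        rcases abs_cases t with ⟨he, _⟩ | ⟨he, _⟩
        · nlinarith
        · nlinarith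
      rw [abs_of_pos ht, min_eq_left hts.le, max_eq_right (by nlinarith),
        mul_div_assoc, div_self (ne_of_gt ht), mul_one]

lemma truncFun_of_abs_le {s t : ℝ} (h : |t| ≤ s) : truncFun s t = t := if_pos h

lemma abs_truncFun_le' {s : ℝ} (hs : 0 ≤ s) (t : ℝ) : |truncFun s t| ≤ s := by
  rw [truncFun_eq_clamp hs, abs_le]
  constructor
  · exact le_max_left _ _
  · exact max_le (by linarith) (min_le_left _ _)

lemma abs_truncFun_sub_truncFun {s : ℝ} (hs : 0 ≤ s) (a b : ℝ) :
    |truncFun s a - truncFun s b| ≤ |a - b| := by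
  rw [truncFun_eq_clamp hs, truncFun_eq_clamp hs]
  have h1 : |max (-s) (min s a) - max (-s) (min s b)| ≤ max |(-s) - (-s)| |min s a - min s b| :=
    abs_max_sub_max_le_max _ _ _ _
  have h2 : |min s a - min s b| ≤ max |s - s| |a - b| := abs_min_sub_min_le_max _ _ _ _
  simp only [sub_self, abs_zero] at h1 h2
  calc |max (-s) (min s a) - max (-s) (min s b)| ≤ max 0 |min s a - min s b| := h1
    _ = |min s a - min s b| := max_eq_right (abs_nonneg _)
    _ ≤ max 0 |a - b| := h2
    _ = |a - b| := max_eq_right (abs_nonneg _)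

end Step3Aux
section Step3Aux2

variable {Γ : Type*} [TopologicalSpace Γ] [DiscreteTopology Γ]

open BoundedContinuousFunction

lemma Linf_norm_le {x : Linf Γ} {C : ℝ} (hC : 0 ≤ C) (h : ∀ γ, |x γ| ≤ C) : ‖x‖ ≤ C :=
  (BoundedContinuousFunction.norm_le hC).2 (fun γ => by rw [Real.norm_eq_abs]; exact h γ)

lemma Linf_abs_le_norm (x : Linf Γ) (γ : Γ) : |x γ| ≤ ‖x‖ := by
  simpa [Real.norm_eq_abs] using x.norm_coe_le_norm γ

/-- Integer-valued elements of `ℓ∞(Γ)`. -/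
def IsInt (x : Linf Γ) : Prop := ∀ γ, ∃ k : ℤ, x γ = k

lemma isInt_quant (x : Linf Γ) : IsInt (quant x) := fun γ => ent_isInt (x γ)

lemma quant_eq_self {x : Linf Γ} (hx : IsInt x) : quant x = x := by
  ext γ
  obtain ⟨k, hk⟩ := hx γ
  rw [quant_apply, hk, ent_intCast]

lemma isInt_restr {x : Linf Γ} (hx : IsInt x) (S : Set Γ) : IsInt (restr S x) := by
  intro γ
  by_cases h : γ ∈ S
  · rw [restr_apply, Set.indicator_of_mem h]; exact hx γ
  · exact ⟨0, by rw [restr_apply, Set.indicator_of_notMem h]; simp⟩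

lemma isInt_sub {x y : Linf Γ} (hx : IsInt x) (hy : IsInt y) : IsInt (x - y) := by
  intro γ
  obtain ⟨k, hk⟩ := hx γ; obtain ⟨l, hl⟩ := hy γ
  exact ⟨k - l, by rw [BoundedContinuousFunction.sub_apply, hk, hl]; push_cast; ring⟩

lemma norm_quant_le (x : Linf Γ) : ‖quant x‖ ≤ ‖x‖ :=
  Linf_norm_le (norm_nonneg x) (fun γ => (abs_ent_le (x γ)).trans (Linf_abs_le_norm x γ))

lemma norm_quant_sub_self (x : Linf Γ) : ‖quant x - x‖ ≤ 1 :=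
  Linf_norm_le one_pos.le (fun γ => by
    rw [BoundedContinuousFunction.sub_apply, quant_apply]; exact abs_ent_sub_le (x γ))

lemma norm_quant_sub_quant (x y : Linf Γ) : ‖quant x - quant y‖ ≤ ‖x - y‖ + 2 :=
  Linf_norm_le (by positivity) (fun γ => by
    rw [BoundedContinuousFunction.sub_apply, quant_apply, quant_apply]
    exact (abs_ent_sub_ent_le (x γ) (y γ)).trans (by
      have := Linf_abs_le_norm (x - y) γ
      rw [BoundedContinuousFunction.sub_apply] at this
      linarith))

lemma norm_restr_le (S : Set Γ) (x : Linf Γ) : ‖restr S x‖ ≤ ‖x‖ :=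
  Linf_norm_le (norm_nonneg x) (fun γ => by
    by_cases h : γ ∈ S
    · rw [restr_apply, Set.indicator_of_mem h]; exact Linf_abs_le_norm x γ
    · rw [restr_apply, Set.indicator_of_notMem h]; simpa using norm_nonneg x)

lemma norm_restr_sub_restr_le (S : Set Γ) (x y : Linf Γ) :
    ‖restr S x - restr S y‖ ≤ ‖x - y‖ :=
  Linf_norm_le (norm_nonneg _) (fun γ => by
    rw [BoundedContinuousFunction.sub_apply]
    by_cases h : γ ∈ S
    · rw [restr_apply, restr_apply, Set.indicator_of_mem h, Set.indicator_of_mem h]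
      have := Linf_abs_le_norm (x - y) γ
      rwa [BoundedContinuousFunction.sub_apply] at this
    · rw [restr_apply, restr_apply, Set.indicator_of_notMem h, Set.indicator_of_notMem h]
      simpa using norm_nonneg (x - y))

lemma restr_restr {S T : Set Γ} (hST : S ⊆ T) (x : Linf Γ) :
    restr S (restr T x) = restr S x := by
  ext γ
  by_cases h : γ ∈ S
  · rw [restr_apply_mem _ h, restr_apply_mem _ h, restr_apply_mem _ (hST h)]
  · rw [restr_apply_not_mem _ h, restr_apply_not_mem _ h]

lemma restr_eq_self {S : Set Γ} {x : Linf Γ} (hx : ∀ γ ∉ S, x γ = 0) :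
    restr S x = x := by
  ext γ
  by_cases h : γ ∈ S
  · exact restr_apply_mem _ h
  · rw [restr_apply_not_mem _ h, hx γ h]

/-- sup-norm separation of distinct integer-valued functions. -/
lemma one_le_norm_sub {x y : Linf Γ} (hx : IsInt x) (hy : IsInt y) (hne : x ≠ y) :
    1 ≤ ‖x - y‖ := by
  have : ∃ γ, x γ ≠ y γ := by
    by_contra h
    push_neg at h
    exact hne (BoundedContinuousFunction.ext h)
  obtain ⟨γ, hγ⟩ := this
  obtain ⟨k, hk⟩ := hx γ; obtain ⟨l, hl⟩ := hy γ
  have hkl : k ≠ l := fun h => hγ (by rw [hk, hl, h])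
  have h1 : (1 : ℝ) ≤ |(k : ℝ) - l| := by
    have h2 : (1 : ℤ) ≤ |k - l| := by
      rcases lt_or_gt_of_ne hkl with h | h
      · rw [abs_of_neg (by omega)]; omega
      · rw [abs_of_pos (by omega)]; omega
    calc (1:ℝ) ≤ ((|k - l| : ℤ) : ℝ) := by exact_mod_cast h2
      _ = |(k : ℝ) - l| := by rw [Int.cast_abs]; push_cast; ring_nf
  calc (1:ℝ) ≤ |(k:ℝ) - l| := h1
    _ = |(x - y) γ| := by rw [BoundedContinuousFunction.sub_apply, hk, hl]
    _ ≤ ‖x - y‖ := Linf_abs_le_norm _ _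

/-- For an integer-valued function, any natural bound below the norm is attained. -/
lemma exists_abs_ge_of_isInt [Nonempty Γ] {x : Linf Γ} (hx : IsInt x) {k : ℕ}
    (h : (k : ℝ) - 1 < ‖x‖) (hk : 1 ≤ k) : ∃ γ, (k : ℝ) ≤ |x γ| := by
  by_contra hc
  push_neg at hc
  have : ‖x‖ ≤ (k : ℝ) - 1 := by
    have hk1 : (1:ℝ) ≤ (k:ℝ) := by exact_mod_cast hk
    apply Linf_norm_le (by linarith)
    intro γ
    obtain ⟨l, hl⟩ := hx γ
    have h1 : |x γ| < k := hc γ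
    rw [hl] at h1 ⊢
    have : |l| < (k : ℤ) := by exact_mod_cast (by rwa [← Int.cast_abs] at h1 : ((|l| : ℤ) : ℝ) < k)
    have : |l| ≤ (k : ℤ) - 1 := by omega
    calc |(l:ℝ)| = ((|l| : ℤ) : ℝ) := by rw [Int.cast_abs]
      _ ≤ ((k : ℤ) - 1 : ℤ) := by exact_mod_cast this
      _ = (k : ℝ) - 1 := by push_cast; ring
  linarith

/-- Description of the image `quant '' suppBall S s`. -/
lemma quant_image_suppBall {S : Set Γ} {s : ℝ} (hs : 0 ≤ s) :
    quant '' suppBall S s = {f : Linf Γ | IsInt f ∧ (∀ γ ∉ S, f γ = 0) ∧ ‖f‖ ≤ s} := by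
  ext f
  constructor
  · rintro ⟨g, ⟨hg0, hgn⟩, rfl⟩
    refine ⟨isInt_quant g, fun γ hγ => by rw [quant_apply, hg0 γ hγ]; simpa using ent_intCast 0,
      (norm_quant_le g).trans hgn⟩
  · rintro ⟨hint, h0, hn⟩
    exact ⟨f, ⟨h0, hn⟩, quant_eq_self hint⟩

end Step3Aux2
section Step3BD

variable {Γ : Type*} [TopologicalSpace Γ] [DiscreteTopology Γ] (B : BD Γ)

lemma one_le_lamR : (1 : ℝ) ≤ (B.lam : ℝ) := by exact_mod_cast B.one_le_lam

lemma s_nonneg (k : ℕ) : 0 ≤ B.s k := by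
  unfold BD.s; positivity

lemma one_le_s (k : ℕ) : 1 ≤ B.s k := one_le_pow₀ (one_le_lamR B)

lemma s_mono {j k : ℕ} (h : j ≤ k) : B.s j ≤ B.s k :=
  pow_le_pow_right₀ (one_le_lamR B) h

lemma lam_mul_s (k : ℕ) : (B.lam : ℝ) * B.s k = B.s (k + 1) := by
  unfold BD.s; ring

lemma norm_i_apply_le {l : ℕ} (hl : 1 ≤ l) (x : Linf Γ) :
    ‖B.i l x‖ ≤ (B.lam : ℝ) * ‖x‖ :=
  (ContinuousLinearMap.le_opNorm _ _).trans
    (mul_le_mul_of_nonneg_right (B.norm_i_le l hl) (norm_nonneg x))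

lemma Γs_subset {j k : ℕ} (hj : 1 ≤ j) (hjk : j ≤ k) : B.Γs j ⊆ B.Γs k := by
  induction k with
  | zero => omega
  | succ k ih =>
      rcases Nat.lt_or_ge j (k+1) with h | h
      · exact (ih (by omega)).trans (B.ssubset k (by omega)).subset
      · have : j = k + 1 := by omega
        subst this; exact subset_rfl

/-- `Rep l b z`: `z = quant (i_l b)` with `b` integer-valued and supported on `Γ_l`. -/
def RepB (l : ℕ) (b z : Linf Γ) : Prop :=
  IsInt b ∧ (∀ γ ∉ B.Γs l, b γ = 0) ∧ z = quant (B.i l b)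

lemma restr_i_eq {l : ℕ} (hl : 1 ≤ l) {b : Linf Γ} (hb : ∀ γ ∉ B.Γs l, b γ = 0) :
    restr (B.Γs l) (B.i l b) = b := by
  ext γ
  by_cases h : γ ∈ B.Γs l
  · rw [restr_apply_mem _ h, B.extension l hl b γ h]
  · rw [restr_apply_not_mem _ h, hb γ h]

lemma rep_restr {l : ℕ} (hl : 1 ≤ l) {b z : Linf Γ} (h : RepB B l b z) :
    restr (B.Γs l) z = b := by
  obtain ⟨hint, hsupp, rfl⟩ := h
  ext γ
  by_cases hγ : γ ∈ B.Γs l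
  · rw [restr_apply_mem _ hγ, quant_apply, B.extension l hl b γ hγ]
    obtain ⟨k, hk⟩ := hint γ
    rw [hk, ent_intCast]
  · rw [restr_apply_not_mem _ hγ, hsupp γ hγ]

lemma i_restr_i_eq {l k : ℕ} (hl : 1 ≤ l) (hlk : l ≤ k) {b : Linf Γ}
    (hb : ∀ γ ∉ B.Γs l, b γ = 0) :
    B.i k (restr (B.Γs k) (B.i l b)) = B.i l b := by
  rcases Nat.lt_or_ge l k with h | h
  · exact B.compatible l k hl h b
  · have : l = k := by omega
    subst this
    rw [restr_i_eq B hl hb]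

lemma M_zero : B.M 0 = ∅ := rfl

lemma M_succ (k : ℕ) : B.M (k+1) = B.M k ∪
    (fun z => quant (B.i (k + 1) z)) ''
      (quant '' suppBall (B.Γs (k + 1)) (B.s (k + 1)) \ restr (B.Γs (k + 1)) '' B.M k) := rfl

lemma M_mono {j k : ℕ} (h : j ≤ k) : B.M j ⊆ B.M k := by
  induction k with
  | zero => have : j = 0 := by omega
            subst this; exact subset_rfl
  | succ k ih =>
      rcases Nat.lt_or_ge j (k+1) with h' | h'
      · refine (ih (by omega)).trans ?_
        rw [M_succ]; exact Set.subset_union_left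
      · have : j = k + 1 := by omega
        subst this; exact subset_rfl

/-- Structure of elements of `M k`: fresh representation at the minimal level. -/
lemma Mrep {k : ℕ} {z : Linf Γ} (hz : z ∈ B.M k) :
    ∃ l b, 1 ≤ l ∧ l ≤ k ∧ z ∈ B.M l ∧ RepB B l b z ∧ ‖b‖ ≤ B.s l ∧
      b ∉ restr (B.Γs l) '' B.M (l - 1) := by
  induction k with
  | zero => exact absurd hz (by rw [M_zero]; exact Set.notMem_empty z)
  | succ k ih =>
      rw [M_succ] at hz
      rcases hz with hz | hz
      · obtain ⟨l, b, h1, h2, h3, h4, h5, h6⟩ := ih hz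
        exact ⟨l, b, h1, by omega, h3, h4, h5, h6⟩
      · obtain ⟨y, ⟨hy1, hy2⟩, rfl⟩ := hz
        rw [quant_image_suppBall (s_nonneg B (k+1))] at hy1
        obtain ⟨hint, hsupp, hnorm⟩ := hy1
        refine ⟨k+1, y, by omega, le_rfl, ?_, ⟨hint, hsupp, rfl⟩, hnorm, by simpa using hy2⟩
        rw [M_succ]
        refine Or.inr ⟨y, ⟨?_, hy2⟩, rfl⟩
        rw [quant_image_suppBall (s_nonneg B (k+1))]
        exact ⟨hint, hsupp, hnorm⟩

/-- The auxiliary operator in the definition of `C`. -/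
def Aop (m : ℕ) (y : Linf Γ) : Linf Γ :=
  quant (trunc (B.s (m+1)) (restr (B.Γs (m+1)) (B.i m y)))

lemma Aop_isInt (m : ℕ) (y : Linf Γ) : IsInt (Aop B m y) := isInt_quant _

lemma Aop_supp (m : ℕ) (y : Linf Γ) : ∀ γ ∉ B.Γs (m+1), Aop B m y γ = 0 := by
  intro γ hγ
  unfold Aop
  rw [quant_apply, trunc_apply, restr_apply_not_mem _ hγ,
    truncFun_of_abs_le (by rw [abs_zero]; exact s_nonneg B (m+1))]
  simpa using ent_intCast 0

lemma Aop_norm_le (m : ℕ) (y : Linf Γ) : ‖Aop B m y‖ ≤ B.s (m+1) := by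
  refine (norm_quant_le _).trans (Linf_norm_le (s_nonneg B (m+1)) (fun γ => ?_))
  rw [trunc_apply]
  exact abs_truncFun_le' (s_nonneg B (m+1)) _

lemma Crep {m : ℕ} {z : Linf Γ} (hz : z ∈ B.C m) :
    ∃ y, IsInt y ∧ (∀ γ ∉ B.Γs m, y γ = 0) ∧ ‖y‖ ≤ B.s (m+1) ∧ ¬(‖y‖ ≤ B.s m) ∧
      z = quant (B.i (m+1) (Aop B m y)) := by
  obtain ⟨y, ⟨hy1, hy2⟩, rfl⟩ := hz
  rw [quant_image_suppBall (s_nonneg B (m+1))] at hy1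
  obtain ⟨hint, hsupp, hnorm⟩ := hy1
  refine ⟨y, hint, hsupp, hnorm, fun hc => hy2 ?_, rfl⟩
  rw [quant_image_suppBall (s_nonneg B m)]
  exact ⟨hint, hsupp, hc⟩

end Step3BD
section Step3BD2

variable {Γ : Type*} [TopologicalSpace Γ] [DiscreteTopology Γ] (B : BD Γ)

/-- Data extracted from a membership `u ∈ M m`. -/
lemma M_data {m : ℕ} (hm : 1 ≤ m) {u : Linf Γ} (hu : u ∈ B.M m) :
    ∃ w : Linf Γ, u = quant w ∧ w = B.i m (restr (B.Γs m) w) ∧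
      w = B.i (m+1) (restr (B.Γs (m+1)) w) ∧ ‖w‖ ≤ B.s (m+1) ∧
      ‖restr (B.Γs m) w - restr (B.Γs m) u‖ ≤ 1 := by
  obtain ⟨l, b, hl1, hlm, hzMl, ⟨hint, hsupp, hrep⟩, hbnorm, -⟩ := Mrep B hu
  refine ⟨B.i l b, hrep, (i_restr_i_eq B hl1 hlm hsupp).symm,
    (i_restr_i_eq B hl1 (by omega) hsupp).symm, ?_, ?_⟩
  · calc ‖B.i l b‖ ≤ (B.lam : ℝ) * ‖b‖ := norm_i_apply_le B hl1 b
      _ ≤ (B.lam : ℝ) * B.s l := by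
          exact mul_le_mul_of_nonneg_left hbnorm (by linarith [one_le_lamR B])
      _ = B.s (l + 1) := lam_mul_s B l
      _ ≤ B.s (m+1) := s_mono B (by omega)
  · refine Linf_norm_le one_pos.le (fun γ => ?_)
    rw [BoundedContinuousFunction.sub_apply]
    by_cases h : γ ∈ B.Γs m
    · rw [restr_apply_mem _ h, restr_apply_mem _ h, hrep, quant_apply]
      rw [abs_sub_comm]
      exact abs_ent_sub_le _
    · rw [restr_apply_not_mem _ h, restr_apply_not_mem _ h]; simp

/-- The restriction to `Γ_m` of an element of `C m` recovers its generator. -/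
lemma restr_C {m : ℕ} (hm : 1 ≤ m) {y : Linf Γ} (hint : IsInt y)
    (hsupp : ∀ γ ∉ B.Γs m, y γ = 0) (hnorm : ‖y‖ ≤ B.s (m+1)) :
    restr (B.Γs m) (quant (B.i (m+1) (Aop B m y))) = y := by
  ext γ
  by_cases h : γ ∈ B.Γs m
  · have hΓ : γ ∈ B.Γs (m+1) := Γs_subset B hm (by omega) h
    rw [restr_apply_mem _ h, quant_apply, B.extension (m+1) (by omega) _ γ hΓ]
    unfold Aop
    rw [quant_apply, trunc_apply, restr_apply_mem _ hΓ, B.extension m hm y γ h]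
    rw [truncFun_of_abs_le ((Linf_abs_le_norm y γ).trans hnorm)]
    obtain ⟨k, hk⟩ := hint γ
    rw [hk, ent_intCast, ent_intCast]
  · rw [restr_apply_not_mem _ h, hsupp γ h]

/-- Norm of the restriction to `Γ_m` of an element of `M m`. -/
lemma norm_restr_M {m : ℕ} (hm : 1 ≤ m) {u : Linf Γ} (hu : u ∈ B.M m) :
    ‖restr (B.Γs m) u‖ ≤ B.s m := by
  obtain ⟨l, b, hl1, hlm, hzMl, ⟨hint, hsupp, hrep⟩, hbnorm, -⟩ := Mrep B hu
  refine Linf_norm_le (s_nonneg B m) (fun γ => ?_)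
  by_cases h : γ ∈ B.Γs m
  · rw [restr_apply_mem _ h, hrep, quant_apply]
    refine (abs_ent_le _).trans ?_
    rcases Nat.lt_or_ge l m with hlt | hge
    · calc |B.i l b γ| ≤ ‖B.i l b‖ := Linf_abs_le_norm _ _
        _ ≤ (B.lam : ℝ) * ‖b‖ := norm_i_apply_le B hl1 b
        _ ≤ (B.lam : ℝ) * B.s l := by
            exact mul_le_mul_of_nonneg_left hbnorm (by linarith [one_le_lamR B])
        _ = B.s (l+1) := lam_mul_s B l
        _ ≤ B.s m := s_mono B (by omega)
    · have : l = m := by omega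
      subst this
      rw [B.extension l hl1 b γ h]
      exact (Linf_abs_le_norm b γ).trans hbnorm
  · rw [restr_apply_not_mem _ h]
    simpa using s_nonneg B m

/-- Injectivity of `restr Γ_m` on `D m`. -/
lemma restr_injOn_D {m : ℕ} (hm : 1 ≤ m) :
    ∀ u ∈ B.D m, ∀ v ∈ B.D m, restr (B.Γs m) u = restr (B.Γs m) v → u = v := by
  -- key MM-case auxiliary
  have MM : ∀ u ∈ B.M m, ∀ v ∈ B.M m, restr (B.Γs m) u = restr (B.Γs m) v → u = v := by
    have key : ∀ u ∈ B.M m, ∀ v ∈ B.M m,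
        ∀ lu bu, 1 ≤ lu → lu ≤ m → u ∈ B.M lu → RepB B lu bu u → bu ∉ restr (B.Γs lu) '' B.M (lu - 1) →
        ∀ lv bv, 1 ≤ lv → lv ≤ m → v ∈ B.M lv → RepB B lv bv v → bv ∉ restr (B.Γs lv) '' B.M (lv - 1) →
        lu ≤ lv → restr (B.Γs m) u = restr (B.Γs m) v → u = v := by
      intro u hu v hv lu bu hlu1 hlum huMl hrepu hfreshu lv bv hlv1 hlvm hvMl hrepv hfreshv hle hres
      have hres' : restr (B.Γs lv) u = restr (B.Γs lv) v := by
        have h1 := restr_restr (Γs_subset B hlv1 hlvm) u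
        have h2 := restr_restr (Γs_subset B hlv1 hlvm) v
        rw [← h1, ← h2, hres]
      rcases Nat.lt_or_ge lu lv with hlt | hge
      · exfalso
        apply hfreshv
        refine ⟨u, M_mono B (by omega) huMl, ?_⟩
        rw [hres', rep_restr B hlv1 hrepv]
      · have : lu = lv := by omega
        subst this
        have : bu = bv := by
          rw [← rep_restr B hlu1 hrepu, ← rep_restr B hlu1 hrepv, hres']
        rw [hrepu.2.2, hrepv.2.2, this]
    intro u hu v hv hres
    obtain ⟨lu, bu, h1, h2, h3, h4, h5, h6⟩ := Mrep B hu
    obtain ⟨lv, bv, g1, g2, g3, g4, g5, g6⟩ := Mrep B hv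
    rcases le_total lu lv with h | h
    · exact key u hu v hv lu bu h1 h2 h3 h4 h6 lv bv g1 g2 g3 g4 g6 h hres
    · exact (key v hv u hu lv bv g1 g2 g3 g4 g6 lu bu h1 h2 h3 h4 h6 h hres.symm).symm
  intro u hu v hv hres
  rcases hu with hu | hu <;> rcases hv with hv | hv
  · exact MM u hu v hv hres
  · -- u ∈ M m, v ∈ C m : impossible since restrictions have different norms
    exfalso
    obtain ⟨y, hint, hsupp, hnorm, hbig, rfl⟩ := Crep B hv
    apply hbig
    rw [← restr_C B hm hint hsupp hnorm, ← hres]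
    exact norm_restr_M B hm hu
  · exfalso
    obtain ⟨y, hint, hsupp, hnorm, hbig, rfl⟩ := Crep B hu
    apply hbig
    rw [← restr_C B hm hint hsupp hnorm, hres]
    exact norm_restr_M B hm hv
  · obtain ⟨y, hint, hsupp, hnorm, hbig, rfl⟩ := Crep B hu
    obtain ⟨y', hint', hsupp', hnorm', hbig', rfl⟩ := Crep B hv
    have : y = y' := by
      rw [← restr_C B hm hint hsupp hnorm, ← restr_C B hm hint' hsupp' hnorm', hres]
    rw [this]

end Step3BD2
section Step3BD3

variable {Γ : Type*} [TopologicalSpace Γ] [DiscreteTopology Γ] (B : BD Γ)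

/-- Quantitative comparison of elements of `D m` through their restrictions to `Γ_m`. -/
lemma D_norm_sub_le {m : ℕ} (hm : 1 ≤ m) :
    ∀ u ∈ B.D m, ∀ v ∈ B.D m,
      ‖u - v‖ ≤ (B.lam : ℝ)^2 * ‖restr (B.Γs m) u - restr (B.Γs m) v‖ +
        (2 * (B.lam : ℝ)^2 + 4 * (B.lam : ℝ) + 2) := by
  have hlam := one_le_lamR B
  -- mixed case as an auxiliary statement
  have MC : ∀ u ∈ B.M m, ∀ v ∈ B.C m,
      ‖u - v‖ ≤ (B.lam : ℝ)^2 * ‖restr (B.Γs m) u - restr (B.Γs m) v‖ +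
        (2 * (B.lam : ℝ)^2 + 4 * (B.lam : ℝ) + 2) := by
    intro u hu v hv
    obtain ⟨w, hw1, hw2, hw3, hw4, hw5⟩ := M_data B hm hu
    obtain ⟨y, hint, hsupp, hnorm, hbig, hv5⟩ := Crep B hv
    set dm := ‖restr (B.Γs m) u - restr (B.Γs m) v‖ with hdm
    have hdm0 : 0 ≤ dm := norm_nonneg _
    have hyv : y = restr (B.Γs m) v := by rw [hv5, restr_C B hm hint hsupp hnorm]
    -- pointwise comparison of the "extended" functions
    have key : ‖restr (B.Γs (m+1)) w - Aop B m y‖ ≤ (B.lam : ℝ) * (dm + 1) + 1 := by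
      refine Linf_norm_le (by nlinarith) (fun γ => ?_)
      rw [BoundedContinuousFunction.sub_apply]
      by_cases h : γ ∈ B.Γs (m+1)
      · rw [restr_apply_mem _ h]
        have hA : |Aop B m y γ - truncFun (B.s (m+1)) (B.i m y γ)| ≤ 1 := by
          unfold Aop
          rw [quant_apply, trunc_apply, restr_apply_mem _ h]
          exact abs_ent_sub_le _
        have hwtr : truncFun (B.s (m+1)) (w γ) = w γ :=
          truncFun_of_abs_le ((Linf_abs_le_norm w γ).trans hw4)
        have htr : |truncFun (B.s (m+1)) (w γ) - truncFun (B.s (m+1)) (B.i m y γ)| ≤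
            |w γ - B.i m y γ| := abs_truncFun_sub_truncFun (s_nonneg B (m+1)) _ _
        have hwy : |w γ - B.i m y γ| ≤ (B.lam : ℝ) * (dm + 1) := by
          have heq : w γ - B.i m y γ = B.i m (restr (B.Γs m) w - y) γ := by
            rw [map_sub, BoundedContinuousFunction.sub_apply, ← hw2]
          rw [heq]
          calc |B.i m (restr (B.Γs m) w - y) γ| ≤ ‖B.i m (restr (B.Γs m) w - y)‖ :=
                Linf_abs_le_norm _ _
            _ ≤ (B.lam : ℝ) * ‖restr (B.Γs m) w - y‖ := norm_i_apply_le B hm _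
            _ ≤ (B.lam : ℝ) * (dm + 1) := by
                refine mul_le_mul_of_nonneg_left ?_ (by linarith)
                have : restr (B.Γs m) w - y =
                    (restr (B.Γs m) w - restr (B.Γs m) u) + (restr (B.Γs m) u - restr (B.Γs m) v) := by
                  rw [hyv]; ring
                rw [this]
                calc ‖_ + _‖ ≤ ‖restr (B.Γs m) w - restr (B.Γs m) u‖ + dm := norm_add_le _ _
                  _ ≤ 1 + dm := by linarith [hw5]
                  _ = dm + 1 := by ring
        calc |w γ - Aop B m y γ| ≤ |w γ - truncFun (B.s (m+1)) (B.i m y γ)| + 1 := by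
              have := abs_add_le (w γ - truncFun (B.s (m+1)) (B.i m y γ))
                (truncFun (B.s (m+1)) (B.i m y γ) - Aop B m y γ)
              rw [abs_sub_comm] at hA
              calc |w γ - Aop B m y γ| = |(w γ - truncFun (B.s (m+1)) (B.i m y γ)) +
                    (truncFun (B.s (m+1)) (B.i m y γ) - Aop B m y γ)| := by ring_nf
                _ ≤ _ + _ := this
                _ ≤ |w γ - truncFun (B.s (m+1)) (B.i m y γ)| + 1 := by linarith
          _ = |truncFun (B.s (m+1)) (w γ) - truncFun (B.s (m+1)) (B.i m y γ)| + 1 := by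
              rw [hwtr]
          _ ≤ |w γ - B.i m y γ| + 1 := by linarith [htr]
          _ ≤ (B.lam : ℝ) * (dm + 1) + 1 := by linarith
      · rw [restr_apply_not_mem _ h, Aop_supp B m y γ h]
        simp only [zero_sub, abs_neg, abs_zero, sub_zero]
        nlinarith
    -- assemble
    have h1 : ‖u - v‖ ≤ ‖w - B.i (m+1) (Aop B m y)‖ + 2 := by
      rw [hw1, hv5]
      exact norm_quant_sub_quant _ _
    have h2 : ‖w - B.i (m+1) (Aop B m y)‖ ≤ (B.lam : ℝ) * ((B.lam : ℝ) * (dm + 1) + 1) := by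
      have heq : w - B.i (m+1) (Aop B m y) = B.i (m+1) (restr (B.Γs (m+1)) w - Aop B m y) := by
        rw [map_sub, ← hw3]
      rw [heq]
      calc ‖B.i (m+1) (restr (B.Γs (m+1)) w - Aop B m y)‖ ≤
            (B.lam : ℝ) * ‖restr (B.Γs (m+1)) w - Aop B m y‖ := norm_i_apply_le B (by omega) _
        _ ≤ (B.lam : ℝ) * ((B.lam : ℝ) * (dm + 1) + 1) :=
            mul_le_mul_of_nonneg_left key (by linarith)
    nlinarith [mul_nonneg (mul_nonneg (sub_nonneg.2 hlam) (by linarith : (0:ℝ) ≤ (B.lam:ℝ))) hdm0]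
  intro u hu v hv
  set dm := ‖restr (B.Γs m) u - restr (B.Γs m) v‖ with hdm
  have hdm0 : 0 ≤ dm := norm_nonneg _
  have hlam := one_le_lamR B
  rcases hu with hu | hu <;> rcases hv with hv | hv
  · -- both in M m
    obtain ⟨w, hw1, hw2, hw3, hw4, hw5⟩ := M_data B hm hu
    obtain ⟨w', hw1', hw2', hw3', hw4', hw5'⟩ := M_data B hm hv
    have h1 : ‖u - v‖ ≤ ‖w - w'‖ + 2 := by
      rw [hw1, hw1']; exact norm_quant_sub_quant _ _
    have h2 : ‖w - w'‖ ≤ (B.lam : ℝ) * (dm + 2) := by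
      have heq : w - w' = B.i m (restr (B.Γs m) w - restr (B.Γs m) w') := by
        rw [map_sub, ← hw2, ← hw2']
      rw [heq]
      calc ‖B.i m (restr (B.Γs m) w - restr (B.Γs m) w')‖ ≤
            (B.lam : ℝ) * ‖restr (B.Γs m) w - restr (B.Γs m) w'‖ := norm_i_apply_le B hm _
        _ ≤ (B.lam : ℝ) * (dm + 2) := by
            refine mul_le_mul_of_nonneg_left ?_ (by linarith)
            have : restr (B.Γs m) w - restr (B.Γs m) w' =
                (restr (B.Γs m) w - restr (B.Γs m) u) + (restr (B.Γs m) u - restr (B.Γs m) v)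
                  + (restr (B.Γs m) v - restr (B.Γs m) w') := by ring
            rw [this]
            calc ‖_‖ ≤ ‖(restr (B.Γs m) w - restr (B.Γs m) u) + (restr (B.Γs m) u - restr (B.Γs m) v)‖
                  + ‖restr (B.Γs m) v - restr (B.Γs m) w'‖ := norm_add_le _ _
              _ ≤ ‖restr (B.Γs m) w - restr (B.Γs m) u‖ + dm + ‖restr (B.Γs m) v - restr (B.Γs m) w'‖ := by
                  have := norm_add_le (restr (B.Γs m) w - restr (B.Γs m) u)
                    (restr (B.Γs m) u - restr (B.Γs m) v)
                  linarith
              _ ≤ dm + 2 := by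
                  have e : ‖restr (B.Γs m) v - restr (B.Γs m) w'‖ =
                      ‖restr (B.Γs m) w' - restr (B.Γs m) v‖ := norm_sub_rev _ _
                  rw [e]; linarith [hw5, hw5']
    nlinarith [mul_nonneg (mul_nonneg (sub_nonneg.2 hlam) (by linarith : (0:ℝ) ≤ (B.lam:ℝ))) hdm0]
  · exact MC u hu v hv
  · have h := MC v hv u hu
    have e1 : ‖v - u‖ = ‖u - v‖ := norm_sub_rev _ _
    have e2 : ‖restr (B.Γs m) v - restr (B.Γs m) u‖ = dm := by
      rw [hdm]; exact norm_sub_rev _ _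
    rw [e1, e2] at h
    exact h
  · -- both in C m
    obtain ⟨y, hint, hsupp, hnorm, hbig, hu5⟩ := Crep B hu
    obtain ⟨y', hint', hsupp', hnorm', hbig', hv5⟩ := Crep B hv
    have hyu : y = restr (B.Γs m) u := by rw [hu5, restr_C B hm hint hsupp hnorm]
    have hyv : y' = restr (B.Γs m) v := by rw [hv5, restr_C B hm hint' hsupp' hnorm']
    have key : ‖Aop B m y - Aop B m y'‖ ≤ (B.lam : ℝ) * dm + 2 := by
      unfold Aop
      refine (norm_quant_sub_quant _ _).trans ?_
      have : ‖trunc (B.s (m+1)) (restr (B.Γs (m+1)) (B.i m y)) -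
          trunc (B.s (m+1)) (restr (B.Γs (m+1)) (B.i m y'))‖ ≤ (B.lam : ℝ) * dm := by
        refine Linf_norm_le (by nlinarith) (fun γ => ?_)
        rw [BoundedContinuousFunction.sub_apply, trunc_apply, trunc_apply]
        refine (abs_truncFun_sub_truncFun (s_nonneg B (m+1)) _ _).trans ?_
        by_cases h : γ ∈ B.Γs (m+1)
        · rw [restr_apply_mem _ h, restr_apply_mem _ h]
          have heq : B.i m y γ - B.i m y' γ = B.i m (y - y') γ := by
            rw [map_sub, BoundedContinuousFunction.sub_apply]
          rw [heq]
          calc |B.i m (y - y') γ| ≤ ‖B.i m (y - y')‖ := Linf_abs_le_norm _ _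
            _ ≤ (B.lam : ℝ) * ‖y - y'‖ := norm_i_apply_le B hm _
            _ = (B.lam : ℝ) * dm := by rw [hyu, hyv]
        · rw [restr_apply_not_mem _ h, restr_apply_not_mem _ h]
          simp only [sub_zero, abs_zero]
          nlinarith
      linarith
    have h1 : ‖u - v‖ ≤ ‖B.i (m+1) (Aop B m y) - B.i (m+1) (Aop B m y')‖ + 2 := by
      rw [hu5, hv5]; exact norm_quant_sub_quant _ _
    have h2 : ‖B.i (m+1) (Aop B m y) - B.i (m+1) (Aop B m y')‖ ≤
        (B.lam : ℝ) * ((B.lam : ℝ) * dm + 2) := by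
      rw [← ContinuousLinearMap.map_sub]
      exact (norm_i_apply_le B (by omega) _).trans (mul_le_mul_of_nonneg_left key (by linarith))
    nlinarith

end Step3BD3
section Step3BD4

variable {Γ : Type*} [TopologicalSpace Γ] [DiscreteTopology Γ] (B : BD Γ)

lemma isInt_M {k : ℕ} {z : Linf Γ} (hz : z ∈ B.M k) : IsInt z := by
  obtain ⟨l, b, -, -, -, ⟨-, -, rfl⟩, -, -⟩ := Mrep B hz
  exact isInt_quant _

lemma isInt_D {m : ℕ} {z : Linf Γ} (hz : z ∈ B.D m) : IsInt z := by
  rcases hz with hz | hz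
  · exact isInt_M B hz
  · obtain ⟨y, -, -, -, -, rfl⟩ := Crep B hz
    exact isInt_quant _

/-- Finiteness of the set of integer-valued functions supported on a finite set
with bounded norm. -/
lemma finite_int_ball {S : Set Γ} (hS : S.Finite) (s : ℝ) :
    {f : Linf Γ | IsInt f ∧ (∀ γ ∉ S, f γ = 0) ∧ ‖f‖ ≤ s}.Finite := by
  rw [Set.finite_coe_iff.symm]
  have : Finite ↥S := hS.to_subtype
  have : Finite ↥(Set.Icc (-⌈s⌉) ⌈s⌉ : Set ℤ) := (Set.finite_Icc _ _).to_subtype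
  set T := {f : Linf Γ | IsInt f ∧ (∀ γ ∉ S, f γ = 0) ∧ ‖f‖ ≤ s}
  have F : ∀ f : ↥T, ∀ γ : ↥S, ⌊(f : Linf Γ) (γ : Γ)⌋ ∈ Set.Icc (-⌈s⌉) ⌈s⌉ := by
    rintro ⟨f, hint, hsupp, hnorm⟩ ⟨γ, hγ⟩
    obtain ⟨k, hk⟩ := hint γ
    simp only [hk, Int.floor_intCast]
    have h1 : |(k : ℝ)| ≤ s := by
      rw [← hk]; exact (Linf_abs_le_norm f γ).trans hnorm
    have h3 : |k| ≤ ⌈s⌉ := by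
      have h2 : |(k:ℝ)| ≤ (⌈s⌉ : ℝ) := h1.trans (Int.le_ceil s)
      exact_mod_cast h2
    exact abs_le.mp h3
  refine Finite.of_injective (fun f : ↥T => fun γ : ↥S =>
    (⟨⌊(f : Linf Γ) (γ : Γ)⌋, F f γ⟩ : ↥(Set.Icc (-⌈s⌉) ⌈s⌉ : Set ℤ))) ?_
  rintro ⟨f, hf⟩ ⟨g, hg⟩ h
  ext γ
  by_cases hγ : γ ∈ S
  · have := congrFun h ⟨γ, hγ⟩
    simp only [Subtype.mk_eq_mk] at this
    obtain ⟨k, hk⟩ := hf.1 γ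
    obtain ⟨l, hl⟩ := hg.1 γ
    rw [hk, hl]
    rw [hk, hl, Int.floor_intCast, Int.floor_intCast] at this
    exact_mod_cast this
  · rw [hf.2.1 γ hγ, hg.2.1 γ hγ]

lemma finite_M (k : ℕ) : (B.M k).Finite := by
  induction k with
  | zero => rw [M_zero]; exact Set.finite_empty
  | succ k ih =>
      rw [M_succ]
      refine ih.union (Set.Finite.image _ (Set.Finite.subset ?_ Set.diff_subset))
      rw [quant_image_suppBall (s_nonneg B (k+1))]
      exact finite_int_ball (B.finite (k+1) (by omega)) _

lemma finite_C {m : ℕ} (hm : 1 ≤ m) : (B.C m).Finite := by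
  refine Set.Finite.image _ (Set.Finite.subset ?_ Set.diff_subset)
  rw [quant_image_suppBall (s_nonneg B (m+1))]
  exact finite_int_ball (B.finite m hm) _

lemma finite_D {m : ℕ} (hm : 1 ≤ m) : (B.D m).Finite :=
  (finite_M B m).union (finite_C B hm)

/-- Representation of a top-level element of `M (m+1)`. -/
lemma M_top {m : ℕ} {z : Linf Γ} (hz : z ∈ B.M (m+1)) (hz2 : z ∉ B.M m) :
    IsInt (restr (B.Γs (m+1)) z) ∧ (∀ γ ∉ B.Γs (m+1), restr (B.Γs (m+1)) z γ = 0) ∧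
      ‖restr (B.Γs (m+1)) z‖ ≤ B.s (m+1) ∧
      z = quant (B.i (m+1) (restr (B.Γs (m+1)) z)) ∧
      restr (B.Γs (m+1)) z ∉ restr (B.Γs (m+1)) '' B.M m := by
  rw [M_succ] at hz
  rcases hz with hz | hz
  · exact absurd hz hz2
  obtain ⟨y, ⟨hy1, hy2⟩, rfl⟩ := hz
  rw [quant_image_suppBall (s_nonneg B (m+1))] at hy1
  obtain ⟨hint, hsupp, hnorm⟩ := hy1
  have hres : restr (B.Γs (m+1)) (quant (B.i (m+1) y)) = y :=
    rep_restr B (by omega) ⟨hint, hsupp, rfl⟩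
  rw [hres]
  exact ⟨hint, hsupp, hnorm, rfl, hy2⟩

/-- The restriction to `Γ_{m+1}` of an element of `D m` has norm at most `s (m+1)`. -/
lemma norm_restr_D {m : ℕ} (hm : 1 ≤ m) {u : Linf Γ} (hu : u ∈ B.D m) :
    ‖restr (B.Γs (m+1)) u‖ ≤ B.s (m+1) := by
  rcases hu with hu | hu
  · obtain ⟨w, rfl, -, -, hw4, -⟩ := M_data B hm hu
    exact (norm_restr_le _ _).trans ((norm_quant_le w).trans hw4)
  · obtain ⟨y, hint, hsupp, hnorm, -, rfl⟩ := Crep B hu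
    have : restr (B.Γs (m+1)) (quant (B.i (m+1) (Aop B m y))) = Aop B m y :=
      rep_restr B (by omega) ⟨Aop_isInt B m y, Aop_supp B m y, rfl⟩
    rw [this]
    exact Aop_norm_le B m y

/-- An element of `D m` is within `λ + 2` of the canonical point built from its
restriction to `Γ_{m+1}`. -/
lemma D_near_canonical {m : ℕ} (hm : 1 ≤ m) {u : Linf Γ} (hu : u ∈ B.D m) :
    ‖quant (B.i (m+1) (restr (B.Γs (m+1)) u)) - u‖ ≤ (B.lam : ℝ) + 2 := by
  have main : ∀ w : Linf Γ, u = quant w → w = B.i (m+1) (restr (B.Γs (m+1)) w) →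
      ‖quant (B.i (m+1) (restr (B.Γs (m+1)) u)) - u‖ ≤ (B.lam : ℝ) + 2 := by
    intro w hw1 hw2
    have hr : ‖restr (B.Γs (m+1)) u - restr (B.Γs (m+1)) w‖ ≤ 1 := by
      refine Linf_norm_le one_pos.le (fun γ => ?_)
      rw [BoundedContinuousFunction.sub_apply]
      by_cases h : γ ∈ B.Γs (m+1)
      · rw [restr_apply_mem _ h, restr_apply_mem _ h, hw1, quant_apply]
        exact abs_ent_sub_le _
      · rw [restr_apply_not_mem _ h, restr_apply_not_mem _ h]; simp
    have h1 : ‖quant (B.i (m+1) (restr (B.Γs (m+1)) u)) - u‖ ≤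
        ‖B.i (m+1) (restr (B.Γs (m+1)) u) - w‖ + 2 := by
      have := norm_quant_sub_quant (B.i (m+1) (restr (B.Γs (m+1)) u)) w
      rwa [← hw1] at this
    have h2 : ‖B.i (m+1) (restr (B.Γs (m+1)) u) - w‖ ≤ (B.lam : ℝ) := by
      have heq : B.i (m+1) (restr (B.Γs (m+1)) u) - w =
          B.i (m+1) (restr (B.Γs (m+1)) u - restr (B.Γs (m+1)) w) := by
        rw [map_sub, ← hw2]
      rw [heq]
      calc ‖_‖ ≤ (B.lam : ℝ) * ‖restr (B.Γs (m+1)) u - restr (B.Γs (m+1)) w‖ :=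
            norm_i_apply_le B (by omega) _
        _ ≤ (B.lam : ℝ) * 1 := mul_le_mul_of_nonneg_left hr (by linarith [one_le_lamR B])
        _ = (B.lam : ℝ) := mul_one _
    linarith
  rcases hu with hu | hu
  · obtain ⟨w, hw1, -, hw3, -, -⟩ := M_data B hm hu
    exact main w hw1 hw3
  · obtain ⟨y, hint, hsupp, hnorm, -, hu5⟩ := Crep B hu
    refine main (B.i (m+1) (Aop B m y)) hu5 ?_
    rw [restr_i_eq B (by omega) (Aop_supp B m y)]

/-- Existence of sections: every restriction of an element of `M (m+1)` to `Γ_m`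
is the restriction of an element of `D m`. -/
lemma exists_section {m : ℕ} (hm : 1 ≤ m) {z : Linf Γ} (hz : z ∈ B.M (m+1)) :
    ∃ u ∈ B.D m, restr (B.Γs m) u = restr (B.Γs m) z := by
  by_cases hzM : z ∈ B.M m
  · exact ⟨z, Or.inl hzM, rfl⟩
  obtain ⟨hint, hsupp, hnorm, hrep, hfresh⟩ := M_top B hz hzM
  set y₀ := restr (B.Γs (m+1)) z with hy₀
  set y' := restr (B.Γs m) z with hy'
  have hy'int : IsInt y' := isInt_restr (isInt_M B hz) _
  have hy'supp : ∀ γ ∉ B.Γs m, y' γ = 0 := fun γ hγ => restr_apply_not_mem _ hγ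
  have hy'norm : ‖y'‖ ≤ B.s (m+1) := by
    have : y' = restr (B.Γs m) y₀ := (restr_restr (Γs_subset B hm (by omega)) z).symm
    rw [this]
    exact (norm_restr_le _ _).trans hnorm
  by_cases hsmall : ‖y'‖ ≤ B.s m
  · by_cases hmem : y' ∈ restr (B.Γs m) '' B.M (m-1)
    · obtain ⟨u, huM, hu⟩ := hmem
      exact ⟨u, Or.inl (M_mono B (by omega) huM), hu⟩
    · refine ⟨quant (B.i m y'), Or.inl ?_, rep_restr B hm ⟨hy'int, hy'supp, rfl⟩⟩
      obtain ⟨m', rfl⟩ : ∃ m', m = m' + 1 := ⟨m - 1, by omega⟩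
      rw [M_succ]
      refine Or.inr ⟨y', ⟨?_, by simpa using hmem⟩, rfl⟩
      rw [quant_image_suppBall (s_nonneg B (m'+1))]
      exact ⟨hy'int, hy'supp, hsmall⟩
  · refine ⟨quant (B.i (m+1) (Aop B m y')), Or.inr ?_,
      restr_C B hm hy'int hy'supp hy'norm⟩
    refine ⟨y', ⟨?_, ?_⟩, rfl⟩
    · rw [quant_image_suppBall (s_nonneg B (m+1))]
      exact ⟨hy'int, hy'supp, hy'norm⟩
    · intro hc
      rw [quant_image_suppBall (s_nonneg B m)] at hc
      exact hsmall hc.2.2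

end Step3BD4
section ClampScalar

/-- Clamp `a` into the interval `[b - c, b + c]`. -/
def clampF (a b c : ℝ) : ℝ := max (b - c) (min (b + c) a)

lemma clampF_eq_self {a b c : ℝ} (h : |a - b| ≤ c) : clampF a b c = a := by
  rw [abs_le] at h
  unfold clampF
  rw [min_eq_right (by linarith), max_eq_right (by linarith)]

lemma abs_clampF_sub_center {a b c : ℝ} (hc : 0 ≤ c) : |clampF a b c - b| ≤ c := by
  unfold clampF
  rcases le_total (b - c) (min (b + c) a) with h | h
  · rw [max_eq_right h, abs_le]
    have := min_le_left (b + c) a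
    constructor <;> linarith
  · rw [max_eq_left h, abs_le]
    constructor <;> linarith

lemma abs_clampF_sub_center_le {a b c : ℝ} (hc : 0 ≤ c) : |clampF a b c - b| ≤ |a - b| := by
  unfold clampF
  rcases le_total (b + c) a with h | h
  · rw [min_eq_left h]
    rw [max_eq_right (by linarith)]
    rw [abs_of_nonneg (by linarith), abs_of_nonneg (by linarith)]
    linarith
  · rw [min_eq_right h]
    rcases le_total (b - c) a with h' | h'
    · rw [max_eq_right h']
    · rw [max_eq_left h']
      rw [abs_of_nonpos (by linarith), abs_of_nonpos (by linarith)]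
      linarith

lemma abs_clampF_sub_center_eq {a b c : ℝ} (hc : 0 ≤ c) (h : c ≤ |a - b|) :
    |clampF a b c - b| = c := by
  unfold clampF
  rcases abs_cases (a - b) with ⟨he, -⟩ | ⟨he, -⟩
  · -- a - b ≥ 0, so a ≥ b + c
    rw [he] at h
    rw [min_eq_left (by linarith), max_eq_right (by linarith)]
    rw [abs_of_nonneg (by linarith)]; ring
  · -- a - b ≤ 0, a ≤ b - c
    rw [he] at h
    rw [max_eq_left (le_trans (min_le_right _ _) (by linarith))]
    rw [abs_of_nonpos (by linarith)]; ring

lemma abs_clampF_sub_clampF {a a' b b' c c' : ℝ} :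
    |clampF a b c - clampF a' b' c'| ≤ |a - a'| + |b - b'| + |c - c'| := by
  unfold clampF
  have h1 : |max (b - c) (min (b + c) a) - max (b' - c') (min (b' + c') a')| ≤
      max |(b - c) - (b' - c')| |min (b + c) a - min (b' + c') a'| :=
    abs_max_sub_max_le_max _ _ _ _
  have h2 : |min (b + c) a - min (b' + c') a'| ≤ max |(b + c) - (b' + c')| |a - a'| :=
    abs_min_sub_min_le_max _ _ _ _
  have h3 : |(b - c) - (b' - c')| ≤ |b - b'| + |c - c'| := by
    calc |(b - c) - (b' - c')| = |(b - b') + -(c - c')| := by ring_nf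
      _ ≤ |b - b'| + |-(c - c')| := abs_add_le _ _
      _ = |b - b'| + |c - c'| := by rw [abs_neg]
  have h4 : |(b + c) - (b' + c')| ≤ |b - b'| + |c - c'| := by
    calc |(b + c) - (b' + c')| = |(b - b') + (c - c')| := by ring_nf
      _ ≤ |b - b'| + |c - c'| := abs_add_le _ _
  have h5 : |a - a'| ≤ |a - a'| + (|b - b'| + |c - c'|) := by
    have := abs_nonneg (b - b'); have := abs_nonneg (c - c'); linarith
  have h6 := abs_nonneg (a - a')
  have h7 := abs_nonneg (b - b')
  have h8 := abs_nonneg (c - c')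
  refine h1.trans (max_le (by linarith) (h2.trans (max_le (by linarith) (by linarith))))

lemma clampF_clampF {a b c c' : ℝ} (hc : 0 ≤ c) (hcc : c ≤ c') :
    clampF (clampF a b c') b c = clampF a b c := by
  have hc' : 0 ≤ c' := le_trans hc hcc
  unfold clampF
  rcases le_total (b + c') a with h | h
  · rw [min_eq_left h, max_eq_right (by linarith : b - c' ≤ b + c'),
      min_eq_left (by linarith : b + c ≤ b + c'), max_eq_right (by linarith : b - c ≤ b + c),
      min_eq_left (by linarith : b + c ≤ a), max_eq_right (by linarith : b - c ≤ b + c)]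
  · rcases le_total a (b - c') with h' | h'
    · rw [min_eq_right (by linarith : a ≤ b + c'), max_eq_left (by linarith : a ≤ b - c'),
        min_eq_right (by linarith : b - c' ≤ b + c), max_eq_left (by linarith : b - c' ≤ b - c),
        min_eq_right (by linarith : a ≤ b + c), max_eq_left (by linarith : a ≤ b - c)]
    · rw [min_eq_right (by linarith : a ≤ b + c'), max_eq_right (by linarith : b - c' ≤ a)]

lemma clampF_int {a b : ℝ} (c : ℕ) (ka kb : ℤ) (ha : a = ka) (hb : b = kb) :
    ∃ k : ℤ, clampF a b c = k := by
  subst ha hb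
  unfold clampF
  refine ⟨max (kb - c) (min (kb + c) ka), ?_⟩
  push_cast
  rcases le_total ((kb : ℝ) + c) ka with h | h <;>
    rcases le_total ((kb : ℝ) - c) (min ((kb:ℝ) + c) ka) with h' | h' <;>
    simp [max_def, min_def] <;> split_ifs <;> push_cast <;> linarith

lemma abs_clampF_le {a b c : ℝ} (hc : 0 ≤ c) : |clampF a b c| ≤ max |a| (|b| + c) := by
  have h1 := abs_clampF_sub_center (a := a) (b := b) hc
  calc |clampF a b c| = |(clampF a b c - b) + b| := by ring_nf
    _ ≤ |clampF a b c - b| + |b| := abs_add_le _ _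
    _ ≤ c + |b| := by linarith
    _ ≤ max |a| (|b| + c) := by rw [add_comm]; exact le_max_right _ _

end ClampScalar
section ClampScalar2

lemma clampF_zero (a b : ℝ) : clampF a b 0 = b := by
  unfold clampF
  rw [sub_zero, add_zero, max_eq_left (min_le_left _ _)]

lemma abs_clampF_le_max {a b c : ℝ} (hc : 0 ≤ c) : |clampF a b c| ≤ max |a| |b| := by
  unfold clampF
  rcases le_total (b + c) a with h | h
  · rw [min_eq_left h, max_eq_right (by linarith : b - c ≤ b + c), abs_le]
    constructor
    · have := neg_abs_le b
      have : -(max |a| |b|) ≤ -|b| := by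
        simp only [neg_le_neg_iff]; exact le_max_right _ _
      linarith [neg_abs_le b, (le_max_right |a| |b|)]
    · linarith [le_abs_self a, le_max_left |a| |b|]
  · rw [min_eq_right h]
    rcases le_total (b - c) a with h' | h'
    · rw [max_eq_right h']
      exact le_max_left _ _
    · rw [max_eq_left h', abs_le]
      constructor
      · linarith [neg_abs_le a, le_max_left |a| |b|]
      · linarith [le_abs_self b, le_max_right |a| |b|]

end ClampScalar2
section Step3Core

variable {Γ : Type*} [TopologicalSpace Γ] [DiscreteTopology Γ] (B : BD Γ) (m : ℕ)

open Classical in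
/-- The canonical section of `restr Γ_m` with values in `D m`. -/
noncomputable def sect (y : Linf Γ) : Linf Γ :=
  if h : ∃ u, u ∈ B.D m ∧ restr (B.Γs m) u = y then h.choose else 0

lemma sect_spec {y : Linf Γ} (h : ∃ u, u ∈ B.D m ∧ restr (B.Γs m) u = y) :
    sect B m y ∈ B.D m ∧ restr (B.Γs m) (sect B m y) = y := by
  rw [sect, dif_pos h]
  exact h.choose_spec

lemma sect_eq_self (hm : 1 ≤ m) {u : Linf Γ} (hu : u ∈ B.D m) :
    sect B m (restr (B.Γs m) u) = u := by
  obtain ⟨h1, h2⟩ := sect_spec B m ⟨u, hu, rfl⟩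
  exact restr_injOn_D B hm _ h1 u hu h2

/-- Short names for the two restrictions of `z`. -/
def yv (z : Linf Γ) : Linf Γ := restr (B.Γs (m+1)) z
def yr (z : Linf Γ) : Linf Γ := restr (B.Γs m) z

/-- The target vector of `z`. -/
def tau (z : Linf Γ) : Linf Γ := restr (B.Γs (m+1)) (sect B m (yr B m z))

def clampVec (z : Linf Γ) (c : ℕ) : Linf Γ :=
  BoundedContinuousFunction.ofNormedAddCommGroup
    (fun γ => clampF (yv B m z γ) (tau B m z γ) c)
    continuous_of_discreteTopology (max ‖yv B m z‖ ‖tau B m z‖) (fun γ => by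
      rw [Real.norm_eq_abs]
      exact (abs_clampF_le_max (by positivity)).trans
        (max_le_max (Linf_abs_le_norm _ γ) (Linf_abs_le_norm _ γ)))

@[simp] lemma clampVec_apply (z : Linf Γ) (c : ℕ) (γ : Γ) :
    clampVec B m z c γ = clampF (yv B m z γ) (tau B m z γ) c := rfl

def Qmap (z : Linf Γ) (c : ℕ) : Linf Γ := quant (B.i (m+1) (clampVec B m z c))

def Pmap (z : Linf Γ) (c : ℕ) : Linf Γ :=
  if c = 0 then sect B m (yr B m z) else Qmap B m z c

def muZ (z : Linf Γ) : ℕ := ⌈‖yv B m z - tau B m z‖⌉₊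

/-! ### facts, under the standing hypotheses -/

variable {B m}

lemma Pmap_zero (z : Linf Γ) : Pmap B m z 0 = sect B m (yr B m z) := if_pos rfl

lemma Pmap_pos (z : Linf Γ) {c : ℕ} (hc : c ≠ 0) : Pmap B m z c = Qmap B m z c := if_neg hc

lemma sectz (hm : 1 ≤ m) {z : Linf Γ} (hz : z ∈ B.M (m+1)) :
    sect B m (yr B m z) ∈ B.D m ∧ restr (B.Γs m) (sect B m (yr B m z)) = yr B m z := by
  refine sect_spec B m ?_
  obtain ⟨u, hu, hres⟩ := exists_section B hm hz
  exact ⟨u, hu, hres⟩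

lemma tau_isInt (hm : 1 ≤ m) {z : Linf Γ} (hz : z ∈ B.M (m+1)) : IsInt (tau B m z) :=
  isInt_restr (isInt_D B (sectz hm hz).1) _

lemma tau_supp (z : Linf Γ) : ∀ γ ∉ B.Γs (m+1), tau B m z γ = 0 := fun γ hγ =>
  restr_apply_not_mem _ hγ

lemma tau_norm (hm : 1 ≤ m) {z : Linf Γ} (hz : z ∈ B.M (m+1)) :
    ‖tau B m z‖ ≤ B.s (m+1) :=
  norm_restr_D B hm (sectz hm hz).1

lemma tau_apply_mem (hm : 1 ≤ m) {z : Linf Γ} (hz : z ∈ B.M (m+1)) {γ : Γ}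
    (hγ : γ ∈ B.Γs m) : tau B m z γ = z γ := by
  have h2 := (sectz hm hz).2
  have h3 : restr (B.Γs m) (sect B m (yr B m z)) γ = yr B m z γ := by rw [h2]
  rw [restr_apply_mem _ hγ] at h3
  unfold tau
  rw [restr_apply_mem _ (Γs_subset B hm (by omega) hγ), h3]
  unfold yr
  rw [restr_apply_mem _ hγ]

/-- If `z ∈ M (m+1) ∩ D m` then `tau z = yv z` (and `sect (yr z) = z`). -/
lemma tau_eq_yv_of_mem_D (hm : 1 ≤ m) {z : Linf Γ} (hzD : z ∈ B.D m) :
    tau B m z = yv B m z ∧ sect B m (yr B m z) = z := by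
  have h := sect_eq_self B m hm hzD
  constructor
  · unfold tau yv yr
    rw [h]
  · exact h

/-- Facts about a top-level element. -/
lemma X_facts (hm : 1 ≤ m) {z : Linf Γ} (hz : z ∈ B.M (m+1)) (hzD : z ∉ B.D m) :
    IsInt (yv B m z) ∧ (∀ γ ∉ B.Γs (m+1), yv B m z γ = 0) ∧ ‖yv B m z‖ ≤ B.s (m+1) ∧
      z = quant (B.i (m+1) (yv B m z)) ∧ yv B m z ∉ restr (B.Γs (m+1)) '' B.M m :=
  M_top B hz (fun h => hzD (Or.inl h))

lemma cv_isInt (hm : 1 ≤ m) {z : Linf Γ} (hz : z ∈ B.M (m+1)) (c : ℕ) :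
    IsInt (clampVec B m z c) := by
  intro γ
  obtain ⟨k, hk⟩ := isInt_restr (isInt_M B hz) (B.Γs (m+1)) γ
  obtain ⟨l, hl⟩ := tau_isInt hm hz γ
  rw [clampVec_apply]
  exact clampF_int c k l hk hl

lemma cv_supp {z : Linf Γ} (c : ℕ) : ∀ γ ∉ B.Γs (m+1), clampVec B m z c γ = 0 := by
  intro γ hγ
  rw [clampVec_apply]
  have h1 : yv B m z γ = 0 := restr_apply_not_mem _ hγ
  have h2 : tau B m z γ = 0 := tau_supp z γ hγ
  rw [h1, h2]
  exact clampF_eq_self (by simpa using Nat.cast_nonneg c)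

lemma cv_norm (hm : 1 ≤ m) {z : Linf Γ} (hz : z ∈ B.M (m+1)) (hzD : z ∉ B.D m) (c : ℕ) :
    ‖clampVec B m z c‖ ≤ B.s (m+1) := by
  refine Linf_norm_le (s_nonneg B (m+1)) (fun γ => ?_)
  rw [clampVec_apply]
  refine (abs_clampF_le_max (by positivity)).trans (max_le ?_ ?_)
  · exact (Linf_abs_le_norm _ γ).trans (X_facts hm hz hzD).2.2.1
  · exact (Linf_abs_le_norm _ γ).trans (tau_norm hm hz)

lemma cv_restr_m (hm : 1 ≤ m) {z : Linf Γ} (hz : z ∈ B.M (m+1)) (c : ℕ) :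
    restr (B.Γs m) (clampVec B m z c) = yr B m z := by
  ext γ
  by_cases h : γ ∈ B.Γs m
  · rw [restr_apply_mem _ h, clampVec_apply, tau_apply_mem hm hz h]
    have hyv : yv B m z γ = z γ := restr_apply_mem _ (Γs_subset B hm (by omega) h)
    rw [hyv, clampF_eq_self (by simpa using Nat.cast_nonneg c)]
    exact (restr_apply_mem _ h).symm
  · rw [restr_apply_not_mem _ h]
    exact (restr_apply_not_mem _ h).symm

lemma cv_sub_tau {z : Linf Γ} (c : ℕ) : ‖clampVec B m z c - tau B m z‖ ≤ c :=
  Linf_norm_le (Nat.cast_nonneg c) (fun γ => by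
    rw [BoundedContinuousFunction.sub_apply, clampVec_apply]
    exact abs_clampF_sub_center (Nat.cast_nonneg c))

lemma cv_eq_yv {z : Linf Γ} {c : ℕ} (h : muZ B m z ≤ c) : clampVec B m z c = yv B m z := by
  ext γ
  rw [clampVec_apply]
  refine clampF_eq_self ?_
  have h1 : |yv B m z γ - tau B m z γ| ≤ ‖yv B m z - tau B m z‖ := by
    have := Linf_abs_le_norm (yv B m z - tau B m z) γ
    rwa [BoundedContinuousFunction.sub_apply] at this
  refine h1.trans ((Nat.le_ceil _).trans ?_)
  exact_mod_cast h

lemma cv_far [Nonempty Γ] (hm : 1 ≤ m) {z : Linf Γ} (hz : z ∈ B.M (m+1)) {c : ℕ}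
    (hc1 : 1 ≤ c) (hc2 : c ≤ muZ B m z) :
    ∃ γ, |clampVec B m z c γ - tau B m z γ| = c := by
  have hint : IsInt (yv B m z - tau B m z) :=
    isInt_sub (isInt_restr (isInt_M B hz) _) (tau_isInt hm hz)
  have hlt : (c : ℝ) - 1 < ‖yv B m z - tau B m z‖ := by
    by_contra hcon
    push_neg at hcon
    have : muZ B m z ≤ c - 1 := by
      unfold muZ
      rw [Nat.ceil_le]
      push_cast [Nat.cast_sub hc1]
      exact hcon
    omega
  obtain ⟨γ, hγ⟩ := exists_abs_ge_of_isInt hint hlt hc1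
  rw [BoundedContinuousFunction.sub_apply] at hγ
  refine ⟨γ, ?_⟩
  rw [clampVec_apply]
  exact abs_clampF_sub_center_eq (Nat.cast_nonneg c) hγ

lemma cv_ne_tau [Nonempty Γ] (hm : 1 ≤ m) {z : Linf Γ} (hz : z ∈ B.M (m+1)) {c : ℕ}
    (hc1 : 1 ≤ c) (hc2 : c ≤ muZ B m z) : clampVec B m z c ≠ tau B m z := by
  obtain ⟨γ, hγ⟩ := cv_far hm hz hc1 hc2
  intro hcon
  rw [hcon, sub_self, abs_zero] at hγ
  have : (1:ℝ) ≤ (c:ℝ) := by exact_mod_cast hc1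
  linarith [hγ.symm.le]

/-- Any element of `D m` whose `Γ_m`-restriction agrees with that of `z` has
`Γ_{m+1}`-restriction `tau z`. -/
lemma unique_restr (hm : 1 ≤ m) {z u : Linf Γ} (hu : u ∈ B.D m)
    (hres : restr (B.Γs m) u = yr B m z) : restr (B.Γs (m+1)) u = tau B m z := by
  have : sect B m (yr B m z) = u := by
    rw [← hres]
    exact sect_eq_self B m hm hu
  unfold tau
  rw [this]

lemma cv_fresh [Nonempty Γ] (hm : 1 ≤ m) {z : Linf Γ} (hz : z ∈ B.M (m+1)) {c : ℕ}
    (hc1 : 1 ≤ c) (hc2 : c ≤ muZ B m z) :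
    clampVec B m z c ∉ restr (B.Γs (m+1)) '' B.M m := by
  rintro ⟨u, huM, hres⟩
  have hresm : restr (B.Γs m) u = yr B m z := by
    rw [← restr_restr (Γs_subset B hm (by omega : m ≤ m + 1)) u, hres,
      cv_restr_m hm hz]
  have := unique_restr hm (Or.inl huM) hresm
  rw [hres] at this
  exact cv_ne_tau hm hz hc1 hc2 this

/-- Purity: intermediate chain points are in `M (m+1) \ D m`. -/
lemma P_mem [Nonempty Γ] (hm : 1 ≤ m) {z : Linf Γ} (hz : z ∈ B.M (m+1)) (hzD : z ∉ B.D m)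
    {c : ℕ} (hc1 : 1 ≤ c) (hc2 : c ≤ muZ B m z) :
    Pmap B m z c ∈ B.M (m+1) ∧ Pmap B m z c ∉ B.D m := by
  have hPq : Pmap B m z c = Qmap B m z c := Pmap_pos z (by omega)
  have hcv : IsInt (clampVec B m z c) ∧ (∀ γ ∉ B.Γs (m+1), clampVec B m z c γ = 0) ∧
      ‖clampVec B m z c‖ ≤ B.s (m+1) :=
    ⟨cv_isInt hm hz c, cv_supp c, cv_norm hm hz hzD c⟩
  have hrep : RepB B (m+1) (clampVec B m z c) (Qmap B m z c) := ⟨hcv.1, hcv.2.1, rfl⟩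
  have hresQ : restr (B.Γs (m+1)) (Qmap B m z c) = clampVec B m z c :=
    rep_restr B (by omega) hrep
  constructor
  · rw [hPq, M_succ]
    refine Or.inr ⟨clampVec B m z c, ⟨?_, cv_fresh hm hz hc1 hc2⟩, rfl⟩
    rw [quant_image_suppBall (s_nonneg B (m+1))]
    exact ⟨hcv.1, hcv.2.1, hcv.2.2⟩
  · rw [hPq]
    intro hQD
    have hresm : restr (B.Γs m) (Qmap B m z c) = yr B m z := by
      rw [← restr_restr (Γs_subset B hm (by omega : m ≤ m + 1)) (Qmap B m z c), hresQ,
        cv_restr_m hm hz]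
    have := unique_restr hm hQD hresm
    rw [hresQ] at this
    exact cv_ne_tau hm hz hc1 hc2 this

lemma P_yv (hm : 1 ≤ m) {z : Linf Γ} (hz : z ∈ B.M (m+1)) {c : ℕ} (hc1 : 1 ≤ c) :
    yv B m (Pmap B m z c) = clampVec B m z c := by
  rw [Pmap_pos z (by omega), Qmap]
  exact rep_restr B (by omega) ⟨cv_isInt hm hz c, cv_supp c, rfl⟩

lemma P_yr (hm : 1 ≤ m) {z : Linf Γ} (hz : z ∈ B.M (m+1)) {c : ℕ} (hc1 : 1 ≤ c) :
    yr B m (Pmap B m z c) = yr B m z := by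
  have h1 := P_yv hm hz (z := z) hc1
  unfold yv at h1
  unfold yr
  rw [← restr_restr (Γs_subset B hm (by omega : m ≤ m + 1)) (Pmap B m z c), h1,
    cv_restr_m hm hz]
  rfl

lemma P_tau (hm : 1 ≤ m) {z : Linf Γ} (hz : z ∈ B.M (m+1)) {c : ℕ} (hc1 : 1 ≤ c) :
    tau B m (Pmap B m z c) = tau B m z := by
  unfold tau
  rw [P_yr hm hz hc1]

lemma P_mu [Nonempty Γ] (hm : 1 ≤ m) {z : Linf Γ} (hz : z ∈ B.M (m+1)) {c : ℕ}
    (hc1 : 1 ≤ c) (hc2 : c ≤ muZ B m z) : muZ B m (Pmap B m z c) = c := by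
  have h1 : muZ B m (Pmap B m z c) = ⌈‖clampVec B m z c - tau B m z‖⌉₊ := by
    unfold muZ
    rw [P_yv hm hz hc1, P_tau hm hz hc1]
  rw [h1]
  refine le_antisymm (Nat.ceil_le.2 (by exact_mod_cast cv_sub_tau c)) ?_
  obtain ⟨γ, hγ⟩ := cv_far hm hz hc1 hc2
  have h2 : (c:ℝ) ≤ ‖clampVec B m z c - tau B m z‖ := by
    rw [← hγ]
    have := Linf_abs_le_norm (clampVec B m z c - tau B m z) γ
    rwa [BoundedContinuousFunction.sub_apply] at this
  calc c = ⌈(c:ℝ)⌉₊ := by rw [Nat.ceil_natCast]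
    _ ≤ _ := Nat.ceil_le_ceil h2

/-- Chain coherence. -/
lemma P_P (hm : 1 ≤ m) {z : Linf Γ} (hz : z ∈ B.M (m+1)) {c c' : ℕ} (hc1 : 1 ≤ c)
    (hcc : c' ≤ c) : Pmap B m (Pmap B m z c) c' = Pmap B m z c' := by
  rcases Nat.eq_zero_or_pos c' with rfl | hc'
  · rw [Pmap_zero, Pmap_zero, P_yr hm hz hc1]
  · have he : clampVec B m (Pmap B m z c) c' = clampVec B m z c' := by
      ext γ
      rw [clampVec_apply, clampVec_apply, P_yv hm hz hc1, P_tau hm hz hc1, clampVec_apply]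
      exact clampF_clampF (Nat.cast_nonneg c') (by exact_mod_cast hcc)
    have h2 : Pmap B m (Pmap B m z c) c' = Qmap B m (Pmap B m z c) c' := Pmap_pos _ (by omega)
    have h3 : Pmap B m z c' = Qmap B m z c' := Pmap_pos _ (by omega)
    rw [h2, h3, Qmap, Qmap, he]

lemma P_self (hm : 1 ≤ m) {z : Linf Γ} (hz : z ∈ B.M (m+1)) (hzD : z ∉ B.D m) {c : ℕ}
    (hc1 : 1 ≤ c) (hc2 : muZ B m z ≤ c) : Pmap B m z c = z := by
  rw [Pmap_pos z (by omega), Qmap, cv_eq_yv hc2]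
  exact (X_facts hm hz hzD).2.2.2.1.symm

lemma P_zero_mem (hm : 1 ≤ m) {z : Linf Γ} (hz : z ∈ B.M (m+1)) :
    Pmap B m z 0 ∈ B.D m ∧ restr (B.Γs m) (Pmap B m z 0) = restr (B.Γs m) z := by
  rw [Pmap_zero]
  exact (sectz hm hz)

/-- `P` and `Q` are uniformly close. -/
lemma P_near_Q (hm : 1 ≤ m) {z : Linf Γ} (hz : z ∈ B.M (m+1)) (c : ℕ) :
    ‖Pmap B m z c - Qmap B m z c‖ ≤ (B.lam : ℝ) + 2 := by
  rcases Nat.eq_zero_or_pos c with rfl | hc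
  · rw [Pmap_zero]
    have he : clampVec B m z 0 = tau B m z := by
      ext γ
      rw [clampVec_apply]
      exact_mod_cast clampF_zero (yv B m z γ) (tau B m z γ)
    unfold Qmap
    rw [he]
    have h := D_near_canonical B hm (sectz hm hz).1
    unfold tau
    have e : ‖sect B m (yr B m z) - quant (B.i (m+1) (restr (B.Γs (m+1)) (sect B m (yr B m z))))‖
        = ‖quant (B.i (m+1) (restr (B.Γs (m+1)) (sect B m (yr B m z)))) - sect B m (yr B m z)‖ :=
      norm_sub_rev _ _
    rw [e]
    exact h
  · rw [Pmap_pos z (by omega), sub_self, norm_zero]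
    positivity

/-- Comparison of canonical chain points. -/
lemma Q_compare {z w : Linf Γ} (c c' : ℕ) :
    ‖Qmap B m z c - Qmap B m w c'‖ ≤
      (B.lam : ℝ) * (‖yv B m z - yv B m w‖ + ‖tau B m z - tau B m w‖ + |(c:ℝ) - (c':ℝ)|) + 2 := by
  have h1 : ‖Qmap B m z c - Qmap B m w c'‖ ≤
      ‖B.i (m+1) (clampVec B m z c) - B.i (m+1) (clampVec B m w c')‖ + 2 :=
    norm_quant_sub_quant _ _
  have h2 : ‖B.i (m+1) (clampVec B m z c) - B.i (m+1) (clampVec B m w c')‖ ≤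
      (B.lam : ℝ) * ‖clampVec B m z c - clampVec B m w c'‖ := by
    rw [← map_sub]
    exact norm_i_apply_le B (by omega) _
  have h3 : ‖clampVec B m z c - clampVec B m w c'‖ ≤
      ‖yv B m z - yv B m w‖ + ‖tau B m z - tau B m w‖ + |(c:ℝ) - (c':ℝ)| := by
    refine Linf_norm_le (by positivity) (fun γ => ?_)
    rw [BoundedContinuousFunction.sub_apply, clampVec_apply, clampVec_apply]
    refine (abs_clampF_sub_clampF).trans ?_
    have e1 : |yv B m z γ - yv B m w γ| ≤ ‖yv B m z - yv B m w‖ := by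
      have := Linf_abs_le_norm (yv B m z - yv B m w) γ
      rwa [BoundedContinuousFunction.sub_apply] at this
    have e2 : |tau B m z γ - tau B m w γ| ≤ ‖tau B m z - tau B m w‖ := by
      have := Linf_abs_le_norm (tau B m z - tau B m w) γ
      rwa [BoundedContinuousFunction.sub_apply] at this
    linarith
  have hlam := one_le_lamR B
  nlinarith [norm_nonneg (clampVec B m z c - clampVec B m w c')]

/-- τ is Lipschitz through the quantitative injectivity of `restr Γ_m` on `D m`. -/
lemma tau_compare (hm : 1 ≤ m) {z w : Linf Γ} (hz : z ∈ B.M (m+1)) (hw : w ∈ B.M (m+1)) :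
    ‖tau B m z - tau B m w‖ ≤
      (B.lam : ℝ)^2 * ‖z - w‖ + (2 * (B.lam : ℝ)^2 + 4 * (B.lam : ℝ) + 2) := by
  have h1 : ‖tau B m z - tau B m w‖ ≤ ‖sect B m (yr B m z) - sect B m (yr B m w)‖ :=
    norm_restr_sub_restr_le _ _ _
  have h2 := D_norm_sub_le B hm _ (sectz hm hz).1 _ (sectz hm hw).1
  rw [(sectz hm hz).2, (sectz hm hw).2] at h2
  have h3 : ‖yr B m z - yr B m w‖ ≤ ‖z - w‖ := norm_restr_sub_restr_le _ _ _
  have hlam := one_le_lamR B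
  nlinarith [norm_nonneg (yr B m z - yr B m w), norm_nonneg (z - w)]

lemma yv_compare (z w : Linf Γ) : ‖yv B m z - yv B m w‖ ≤ ‖z - w‖ :=
  norm_restr_sub_restr_le _ _ _

/-- μ is controlled by distances. -/
lemma mu_le_of (hm : 1 ≤ m) {z w : Linf Γ} (hz : z ∈ B.M (m+1)) (hw : w ∈ B.M (m+1)) :
    (muZ B m z : ℝ) ≤ ‖z - w‖ + ‖yv B m w - tau B m w‖ +
      ((B.lam : ℝ)^2 * ‖z - w‖ + (2 * (B.lam : ℝ)^2 + 4 * (B.lam : ℝ) + 2)) + 1 := by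
  have h0 : ‖yv B m z - tau B m z‖ ≤
      ‖yv B m z - yv B m w‖ + ‖yv B m w - tau B m w‖ + ‖tau B m w - tau B m z‖ := by
    have : yv B m z - tau B m z = (yv B m z - yv B m w) + (yv B m w - tau B m w)
        + (tau B m w - tau B m z) := by ring
    rw [this]
    calc ‖_ + _‖ ≤ ‖(yv B m z - yv B m w) + (yv B m w - tau B m w)‖ + ‖tau B m w - tau B m z‖ :=
          norm_add_le _ _
      _ ≤ _ := by linarith [norm_add_le (yv B m z - yv B m w) (yv B m w - tau B m w)]
  have h1 : (muZ B m z : ℝ) < ‖yv B m z - tau B m z‖ + 1 := by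
    unfold muZ
    exact_mod_cast Nat.ceil_lt_add_one (norm_nonneg _)
  have h2 := tau_compare hm hw hz
  have h3 := yv_compare (B := B) (m := m) z w
  have e1 : ‖tau B m w - tau B m z‖ = ‖tau B m z - tau B m w‖ := norm_sub_rev _ _
  have e2 : ‖w - z‖ = ‖z - w‖ := norm_sub_rev _ _
  rw [e1] at h0
  rw [e2] at h2
  linarith

end Step3Core
section Enum

/-- Enumeration of a finite set sorted by a `ℕ`-valued weight. -/
lemma exists_sorted_enum {α : Type*} {X : Set α} (hX : X.Finite) (μ : α → ℕ) (d : α) :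
    ∃ (N : ℕ) (x : ℕ → α), Set.InjOn x (Set.Icc 1 N) ∧ x '' Set.Icc 1 N = X ∧
      (∀ a b, a ∈ Set.Icc 1 N → b ∈ Set.Icc 1 N → a ≤ b → μ (x a) ≤ μ (x b)) := by
  classical
  set le : α → α → Bool := fun p q => decide (μ p ≤ μ q) with hle
  set l : List α := hX.toFinset.toList.mergeSort le with hl
  have hperm : l.Perm hX.toFinset.toList := List.mergeSort_perm _ _
  have hmem : ∀ z, z ∈ l ↔ z ∈ X := by
    intro z
    rw [hperm.mem_iff, Finset.mem_toList, Set.Finite.mem_toFinset]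
  have hnodup : l.Nodup := hperm.nodup_iff.2 (Finset.nodup_toList _)
  have hsorted : List.Pairwise (fun p q => le p q = true) l :=
    List.pairwise_mergeSort (le := le)
      (fun a b c hab hbc => by simp only [hle, decide_eq_true_eq] at *; omega)
      (fun a b => by simp only [hle, Bool.or_eq_true, decide_eq_true_eq]; omega) _
  refine ⟨l.length, fun j => l.getD (j-1) d, ?_, ?_, ?_⟩
  · intro a ⟨ha1, ha2⟩ b ⟨hb1, hb2⟩ hab
    have hal : a - 1 < l.length := by omega
    have hbl : b - 1 < l.length := by omega
    dsimp only at hab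
    rw [(by rw [List.getD_eq_getElem _ _ hal, List.get_eq_getElem] : l.getD (a-1) d = l.get ⟨a-1, hal⟩), (by rw [List.getD_eq_getElem _ _ hbl, List.get_eq_getElem] : l.getD (b-1) d = l.get ⟨b-1, hbl⟩)] at hab
    have := (hnodup.get_inj_iff).1 hab
    have : a - 1 = b - 1 := congrArg Fin.val this
    omega
  · ext z
    constructor
    · rintro ⟨j, ⟨hj1, hj2⟩, rfl⟩
      have hjl : j - 1 < l.length := by omega
      dsimp only
      rw [(by rw [List.getD_eq_getElem _ _ hjl, List.get_eq_getElem] : l.getD (j-1) d = l.get ⟨j-1, hjl⟩)]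
      exact (hmem _).1 (List.get_mem _ _)
    · intro hz
      obtain ⟨i, hi⟩ := List.mem_iff_get.1 ((hmem z).2 hz)
      refine ⟨i.1 + 1, ⟨by omega, by omega⟩, ?_⟩
      dsimp only
      have hil : i.1 + 1 - 1 < l.length := by omega
      rw [(by simp [List.getD_eq_getElem _ _ hil] : l.getD (i.1+1-1) d = l.get ⟨i.1+1-1, hil⟩), ← hi]
      have he : (⟨i.1 + 1 - 1, hil⟩ : Fin l.length) = i := by apply Fin.ext; simp
      rw [he]
  · intro a b ⟨ha1, ha2⟩ ⟨hb1, hb2⟩ hab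
    have hal : a - 1 < l.length := by omega
    have hbl : b - 1 < l.length := by omega
    dsimp only
    rw [(by rw [List.getD_eq_getElem _ _ hal, List.get_eq_getElem] : l.getD (a-1) d = l.get ⟨a-1, hal⟩), (by rw [List.getD_eq_getElem _ _ hbl, List.get_eq_getElem] : l.getD (b-1) d = l.get ⟨b-1, hbl⟩)]
    rcases Nat.eq_or_lt_of_le hab with rfl | hlt
    · exact le_rfl
    · have : (⟨a-1, hal⟩ : Fin l.length) < ⟨b-1, hbl⟩ := by
        simp only [Fin.mk_lt_mk]; omega
      have h := List.Pairwise.rel_get_of_lt hsorted this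
      simpa only [hle, decide_eq_true_eq] using h
end Enum
section Assembly

variable {Γ : Type*} [TopologicalSpace Γ] [DiscreteTopology Γ] {B : BD Γ} {m : ℕ}

/-- Combination step for the Lipschitz estimate. -/
lemma assemble (hm : 1 ≤ m) {z w az aw : Linf Γ} (cz cw : ℕ)
    (hΔ : |(cz:ℝ) - (cw:ℝ)| ≤ ‖yv B m z - yv B m w‖ + ‖tau B m z - tau B m w‖ + 1)
    (haz : ‖az - Qmap B m z cz‖ ≤ (B.lam:ℝ) + 2)
    (haw : ‖aw - Qmap B m w cw‖ ≤ (B.lam:ℝ) + 2) :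
    ‖az - aw‖ ≤ 2*(B.lam:ℝ)*(‖yv B m z - yv B m w‖ + ‖tau B m z - tau B m w‖) +
      3*(B.lam:ℝ) + 6 := by
  have hQ := Q_compare (B := B) (m := m) (z := z) (w := w) cz cw
  have htri : ‖az - aw‖ ≤ ‖az - Qmap B m z cz‖ + ‖Qmap B m z cz - Qmap B m w cw‖ +
      ‖Qmap B m w cw - aw‖ := by
    have e : az - aw = (az - Qmap B m z cz) + (Qmap B m z cz - Qmap B m w cw) +
        (Qmap B m w cw - aw) := by ring
    rw [e]
    calc ‖_ + _‖ ≤ ‖(az - Qmap B m z cz) + (Qmap B m z cz - Qmap B m w cw)‖ +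
          ‖Qmap B m w cw - aw‖ := norm_add_le _ _
      _ ≤ _ := by linarith [norm_add_le (az - Qmap B m z cz) (Qmap B m z cz - Qmap B m w cw)]
  have he : ‖Qmap B m w cw - aw‖ = ‖aw - Qmap B m w cw‖ := norm_sub_rev _ _
  rw [he] at htri
  have hlam := one_le_lamR B
  have hS0 : 0 ≤ ‖yv B m z - yv B m w‖ + ‖tau B m z - tau B m w‖ := by positivity
  nlinarith [abs_nonneg ((cz:ℝ) - (cw:ℝ))]

lemma final_arith {lam d S v : ℝ} (hlam : 1 ≤ lam) (hd : 1 ≤ d) (hS0 : 0 ≤ S)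
    (hS : S ≤ (1 + lam^2)*d + (2*lam^2 + 4*lam + 2))
    (hv : v ≤ 2*lam*S + 3*lam + 6) :
    v ≤ (3*lam + 2) * (3*lam^2 + 6*lam + 11) * d := by
  have h1 : v ≤ (2*lam + 2*lam^3)*d + (4*lam^3 + 8*lam^2 + 7*lam + 6) := by nlinarith
  have h2 : (4*lam^3 + 8*lam^2 + 7*lam + 6) ≤ (4*lam^3 + 8*lam^2 + 7*lam + 6) * d := by
    have hpos : (0:ℝ) ≤ 4*lam^3 + 8*lam^2 + 7*lam + 6 := by positivity
    nlinarith [mul_le_mul_of_nonneg_left hd hpos]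
  have h3 : (2*lam + 2*lam^3)*d + (4*lam^3 + 8*lam^2 + 7*lam + 6)*d ≤
      (3*lam + 2) * (3*lam^2 + 6*lam + 11) * d := by nlinarith
  linarith

end Assembly
theorem step3_retractions' {Γ : Type*} [TopologicalSpace Γ] [DiscreteTopology Γ]
    (B : BD Γ) (n : ℕ) (hn : 2 ≤ n) :
    ∃ (N : ℕ) (x : ℕ → Linf Γ) (Ψ : ℕ → Linf Γ → Linf Γ),
      Set.InjOn x (Set.Icc 1 N) ∧
      x '' Set.Icc 1 N = B.M n \ B.D (n - 1) ∧
      (∀ i, i < N → ∀ z ∈ B.M n, Ψ i z ∈ B.D (n - 1) ∪ x '' Set.Icc 1 i) ∧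
      (∀ i, i < N → ∀ z ∈ B.D (n - 1) ∪ x '' Set.Icc 1 i, Ψ i z = z) ∧
      (∀ i₁ i₂, i₁ < N → i₂ < N → ∀ z ∈ B.M n, Ψ i₁ (Ψ i₂ z) = Ψ (min i₁ i₂) z) ∧
      (∀ z ∈ B.M n, Ψ 0 z ∈ B.D (n - 1) ∧
        restr (B.Γs (n - 1)) (Ψ 0 z) = restr (B.Γs (n - 1)) z) ∧
      (∀ i, i < N → ∀ z ∈ B.M n, ∀ w ∈ B.M n,
        ‖Ψ i z - Ψ i w‖ ≤
          ((3 * (B.lam : ℝ) + 2) * (3 * (B.lam : ℝ) ^ 2 + 6 * (B.lam : ℝ) + 11)) * ‖z - w‖) := by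
  classical
  obtain ⟨m, rfl⟩ : ∃ m, n = m + 1 := ⟨n - 1, by omega⟩
  have hm : 1 ≤ m := by omega
  simp only [Nat.add_sub_cancel]
  obtain ⟨γ0, -⟩ := B.nonempty 1 le_rfl
  have hΓne : Nonempty Γ := ⟨γ0⟩
  -- the enumeration
  have hXfin : (B.M (m+1) \ B.D m).Finite := (finite_M B (m+1)).subset Set.diff_subset
  obtain ⟨N, x, hinj, himg, hmono⟩ := exists_sorted_enum hXfin (muZ B m) 0
  -- fixed sets, stopping levels, retractions
  set Fx : ℕ → Set (Linf Γ) := fun i => B.D m ∪ x '' Set.Icc 1 i with hFx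
  set cb : Linf Γ → ℕ → ℕ :=
    fun z i => Nat.findGreatest (fun c => Pmap B m z c ∈ Fx i) (muZ B m z) with hcb
  set Ψ : ℕ → Linf Γ → Linf Γ :=
    fun i z => if z ∈ B.M (m+1) \ Fx i then Pmap B m z (cb z i) else z with hΨ
  have hΨdef : ∀ i z, Ψ i z = if z ∈ B.M (m+1) \ Fx i then Pmap B m z (cb z i) else z :=
    fun i z => rfl
  have hFxmono : ∀ {i j : ℕ}, i ≤ j → Fx i ⊆ Fx j := fun {i j} hij =>
    Set.union_subset_union_right _ (Set.image_mono (Set.Icc_subset_Icc_right hij))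
  have hD_Fx : ∀ i, B.D m ⊆ Fx i := fun i => Set.subset_union_left
  -- basic facts about cb
  have hcb_eq : ∀ z i, cb z i = Nat.findGreatest (fun c => Pmap B m z c ∈ Fx i) (muZ B m z) :=
    fun z i => rfl
  have hcb_le : ∀ z i, cb z i ≤ muZ B m z := fun z i => by
    rw [hcb_eq]; exact Nat.findGreatest_le _
  have h0fix : ∀ i, ∀ z ∈ B.M (m+1), Pmap B m z 0 ∈ Fx i := fun i z hz =>
    hD_Fx i (P_zero_mem hm hz).1
  have hcb_mem : ∀ i, ∀ z ∈ B.M (m+1), Pmap B m z (cb z i) ∈ Fx i := fun i z hz => by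
    rw [hcb_eq]
    exact Nat.findGreatest_spec (P := fun c => Pmap B m z c ∈ Fx i) (Nat.zero_le _)
      (h0fix i z hz)
  have hle_cb : ∀ i z, ∀ c ≤ muZ B m z, Pmap B m z c ∈ Fx i → c ≤ cb z i :=
    fun i z c hc hfix => by
      rw [hcb_eq]; exact Nat.le_findGreatest hc hfix
  -- order property
  have horder : ∀ i, i < N → ∀ p ∈ x '' Set.Icc 1 i, ∀ w ∈ B.M (m+1) \ B.D m,
      w ∉ Fx i → muZ B m p ≤ muZ B m w := by
    rintro i hi p ⟨a, ⟨ha1, ha2⟩, rfl⟩ w hw hwf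
    have hw' : w ∈ x '' Set.Icc 1 N := by rw [himg]; exact hw
    obtain ⟨b, ⟨hb1, hb2⟩, rfl⟩ := hw'
    have hbi : i < b := by
      by_contra hc
      exact hwf (Or.inr ⟨b, ⟨hb1, by omega⟩, rfl⟩)
    exact hmono a b ⟨ha1, by omega⟩ ⟨hb1, hb2⟩ (by omega)
  -- the key consequence of sorting
  have hmuP : ∀ i, i < N → ∀ w ∈ B.M (m+1), w ∉ B.D m → w ∉ Fx i →
      ∀ p ∈ x '' Set.Icc 1 i, muZ B m p ≤ cb w i + 1 := by
    intro i hi w hw hwD hwf p hp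
    rcases Nat.lt_or_ge (cb w i) (muZ B m w) with hlt | hge
    · have hc1 : 1 ≤ cb w i + 1 := by omega
      have hc2 : cb w i + 1 ≤ muZ B m w := by omega
      have hPX := P_mem hm hw hwD hc1 hc2
      have hPnf : Pmap B m w (cb w i + 1) ∉ Fx i := by
        have hlt' : Nat.findGreatest (fun c => Pmap B m w c ∈ Fx i) (muZ B m w) < cb w i + 1 := by
          rw [← hcb_eq]; omega
        exact Nat.findGreatest_is_greatest hlt' hc2
      have := horder i hi p hp _ ⟨hPX.1, hPX.2⟩ hPnf
      rwa [P_mu hm hw hc1 hc2] at this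
    · have h1 := horder i hi p hp w ⟨hw, hwD⟩ hwf
      omega
  -- membership of enumerated points
  have hx_mem : ∀ i, i < N → ∀ p ∈ x '' Set.Icc 1 i, p ∈ B.M (m+1) \ B.D m := by
    rintro i hi p ⟨a, ⟨ha1, ha2⟩, rfl⟩
    rw [← himg]
    exact ⟨a, ⟨ha1, by omega⟩, rfl⟩
  refine ⟨N, x, Ψ, hinj, himg, ?_, ?_, ?_, ?_, ?_⟩
  · -- (3) maps into D ∪ {x₁,…,x_i}
    intro i hi z hz
    rw [hΨdef]
    split_ifs with h
    · exact hcb_mem i z hz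
    · have : z ∈ Fx i := by
        by_contra hc
        exact h ⟨hz, hc⟩
      exact this
  · -- (4) identity on D ∪ {x₁,…,x_i}
    intro i hi z hzf
    rw [hΨdef, if_neg (fun hc => hc.2 hzf)]
  · -- (5) composition law
    intro i₁ i₂ h1 h2 z hz
    by_cases hz2 : z ∈ B.M (m+1) \ Fx i₂
    · have hzD : z ∉ B.D m := fun h => hz2.2 (hD_Fx i₂ h)
      have hw : Ψ i₂ z = Pmap B m z (cb z i₂) := by rw [hΨdef]; exact if_pos hz2
      rcases le_or_gt i₂ i₁ with hle | hlt
      · rw [min_eq_right hle, hw]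
        rw [hΨdef]
        exact if_neg (fun hc => hc.2 (hFxmono hle (hcb_mem i₂ z hz)))
      · rw [min_eq_left hlt.le, hw]
        have hz1 : z ∈ B.M (m+1) \ Fx i₁ := ⟨hz, fun h => hz2.2 (hFxmono hlt.le h)⟩
        have hΨ1 : Ψ i₁ z = Pmap B m z (cb z i₁) := by rw [hΨdef]; exact if_pos hz1
        rw [hΨ1]
        have hc12 : cb z i₁ ≤ cb z i₂ :=
          hle_cb i₂ z _ (hcb_le z i₁) (hFxmono hlt.le (hcb_mem i₁ z hz))
        by_cases hc20 : cb z i₂ = 0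
        · have hD0 : Pmap B m z (cb z i₂) ∈ B.D m := by
            rw [hc20]; exact (P_zero_mem hm hz).1
          have e1 : Ψ i₁ (Pmap B m z (cb z i₂)) = Pmap B m z (cb z i₂) := by
            rw [hΨdef]; exact if_neg (fun hc => hc.2 (hD_Fx i₁ hD0))
          rw [e1]
          have : cb z i₁ = cb z i₂ := by omega
          rw [this]
        · have hc2μ : cb z i₂ ≤ muZ B m z := hcb_le z i₂
          have hPX := P_mem hm hz hzD (by omega : 1 ≤ cb z i₂) hc2μ
          by_cases hPfix : Pmap B m z (cb z i₂) ∈ Fx i₁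
          · rw [hΨdef, if_neg (fun hc => hc.2 hPfix)]
            have h21 : cb z i₂ ≤ cb z i₁ := hle_cb i₁ z _ hc2μ hPfix
            have : cb z i₁ = cb z i₂ := by omega
            rw [this]
          · rw [hΨdef, if_pos ⟨hPX.1, hPfix⟩]
            have hμP : muZ B m (Pmap B m z (cb z i₂)) = cb z i₂ :=
              P_mu hm hz (by omega) hc2μ
            have hPc : ∀ c ≤ cb z i₂, Pmap B m (Pmap B m z (cb z i₂)) c = Pmap B m z c :=
              fun c hc => P_P hm hz (by omega) hc
            have e1 : cb (Pmap B m z (cb z i₂)) i₁ = cb z i₁ := by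
              apply le_antisymm
              · have hc'le : cb (Pmap B m z (cb z i₂)) i₁ ≤ cb z i₂ := by
                  have := hcb_le (Pmap B m z (cb z i₂)) i₁
                  omega
                have hc'fix := hcb_mem i₁ _ hPX.1
                rw [hPc _ hc'le] at hc'fix
                exact hle_cb i₁ z _ (le_trans hc'le hc2μ) hc'fix
              · apply hle_cb i₁ _ _ (by omega)
                rw [hPc _ hc12]
                exact hcb_mem i₁ z hz
            rw [e1, hPc _ hc12]
    · have hzf : z ∈ Fx i₂ := by
        by_contra h
        exact hz2 ⟨hz, h⟩
      have hw : Ψ i₂ z = z := by rw [hΨdef]; exact if_neg (fun hc => hc.2 hzf)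
      rw [hw]
      rcases le_or_gt i₁ i₂ with hle | hlt
      · rw [min_eq_left hle]
      · rw [min_eq_right hlt.le]
        have e1 : Ψ i₁ z = z := by rw [hΨdef]; exact if_neg (fun hc => hc.2 (hFxmono hlt.le hzf))
        rw [e1, hw]
  · -- (6) the base retraction is Ψ_n
    intro z hz
    by_cases hzD : z ∈ B.D m
    · have : z ∈ Fx 0 := hD_Fx 0 hzD
      rw [hΨdef, if_neg (fun hc => hc.2 this)]
      exact ⟨hzD, rfl⟩
    · have hznf : z ∉ Fx 0 := by
        rintro (h | ⟨a, ⟨ha1, ha2⟩, rfl⟩)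
        · exact hzD h
        · omega
      rw [hΨdef, if_pos ⟨hz, hznf⟩]
      have hc0 : cb z 0 = 0 := by
        by_contra hc
        have h1 := hcb_mem 0 z hz
        have h2 := P_mem hm hz hzD (by omega : 1 ≤ cb z 0) (hcb_le z 0)
        rcases h1 with h1 | ⟨a, ⟨ha1, ha2⟩, -⟩
        · exact h2.2 h1
        · omega
      rw [hc0]
      exact P_zero_mem hm hz
  · -- (7) the Lipschitz estimate
    intro i hi z hz w hw
    by_cases hzw : z = w
    · subst hzw
      rw [sub_self, norm_zero, sub_self, norm_zero, mul_zero]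
    have hd1 : (1:ℝ) ≤ ‖z - w‖ := one_le_norm_sub (isInt_M B hz) (isInt_M B hw) hzw
    have hlam := one_le_lamR B
    have hSle : ‖yv B m z - yv B m w‖ + ‖tau B m z - tau B m w‖ ≤
        (1 + (B.lam:ℝ)^2) * ‖z - w‖ + (2*(B.lam:ℝ)^2 + 4*(B.lam:ℝ) + 2) := by
      have h1 := yv_compare (B := B) (m := m) z w
      have h2 := tau_compare hm hz hw
      nlinarith
    have hS0 : (0:ℝ) ≤ ‖yv B m z - yv B m w‖ + ‖tau B m z - tau B m w‖ := by positivity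
    -- key: the (fixed, unfixed) case
    have key : ∀ z' ∈ B.M (m+1), ∀ w' ∈ B.M (m+1), z' ∈ Fx i → w' ∉ Fx i →
        ‖yv B m z' - yv B m w'‖ + ‖tau B m z' - tau B m w'‖ ≤
          (1 + (B.lam:ℝ)^2) * ‖z' - w'‖ + (2*(B.lam:ℝ)^2 + 4*(B.lam:ℝ) + 2) →
        (1:ℝ) ≤ ‖z' - w'‖ →
        ‖Ψ i z' - Ψ i w'‖ ≤
          ((3 * (B.lam : ℝ) + 2) * (3 * (B.lam : ℝ) ^ 2 + 6 * (B.lam : ℝ) + 11)) * ‖z' - w'‖ := by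
      intro z' hz' w' hw' hzf hwnf hS hd
      have hwD : w' ∉ B.D m := fun h => hwnf (hD_Fx i h)
      have hΨz : Ψ i z' = z' := by rw [hΨdef]; exact if_neg (fun hc => hc.2 hzf)
      have hΨw : Ψ i w' = Pmap B m w' (cb w' i) := by rw [hΨdef]; exact if_pos ⟨hw', hwnf⟩
      rw [hΨz, hΨw]
      have haw : ‖Pmap B m w' (cb w' i) - Qmap B m w' (cb w' i)‖ ≤ (B.lam:ℝ) + 2 :=
        P_near_Q hm hw' _
      set S := ‖yv B m z' - yv B m w'‖ + ‖tau B m z' - tau B m w'‖ with hSdef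
      have hS0' : (0:ℝ) ≤ S := by positivity
      by_cases hzD : z' ∈ B.D m
      · -- z' is already in D m
        obtain ⟨htau, hsect⟩ := tau_eq_yv_of_mem_D hm hzD (z := z')
        have haz : ‖z' - Qmap B m z' 0‖ ≤ (B.lam:ℝ) + 2 := by
          have := P_near_Q hm hz' 0
          rwa [Pmap_zero, hsect] at this
        have hΔ : |((0:ℕ):ℝ) - ((cb w' i : ℕ):ℝ)| ≤ S + 1 := by
          have hcw : ((cb w' i : ℕ):ℝ) ≤ (muZ B m w' : ℝ) := by
            exact_mod_cast hcb_le w' i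
          have hmu : (muZ B m w' : ℝ) < ‖yv B m w' - tau B m w'‖ + 1 := by
            unfold muZ
            exact_mod_cast Nat.ceil_lt_add_one (norm_nonneg _)
          have hnw : ‖yv B m w' - tau B m w'‖ ≤ S := by
            have e : yv B m w' - tau B m w' =
                (yv B m w' - yv B m z') + (tau B m z' - tau B m w') := by
              rw [htau]; ring
            rw [e]
            have e2 : ‖yv B m w' - yv B m z'‖ = ‖yv B m z' - yv B m w'‖ := norm_sub_rev _ _
            calc ‖_ + _‖ ≤ ‖yv B m w' - yv B m z'‖ + ‖tau B m z' - tau B m w'‖ :=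
                  norm_add_le _ _
              _ ≤ S := by rw [e2]
          rw [abs_sub_comm, Nat.cast_zero, sub_zero, abs_of_nonneg (Nat.cast_nonneg _)]
          linarith
        have := assemble hm 0 (cb w' i) hΔ haz haw
        exact final_arith hlam hd hS0' hS this
      · -- z' = some x_j
        have hzX : z' ∈ x '' Set.Icc 1 i := by
          rcases hzf with h | h
          · exact absurd h hzD
          · exact h
        have hmuz : muZ B m z' ≤ cb w' i + 1 := hmuP i hi w' hw' hwD hwnf z' hzX
        set cz := max (cb w' i) (muZ B m z') with hcz
        have haz : ‖z' - Qmap B m z' cz‖ ≤ (B.lam:ℝ) + 2 := by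
          have he : Qmap B m z' cz = z' := by
            rw [Qmap, cv_eq_yv (le_max_right _ _)]
            exact (X_facts hm hz' hzD).2.2.2.1.symm
          rw [he, sub_self, norm_zero]
          positivity
        have hΔ : |((cz:ℕ):ℝ) - ((cb w' i : ℕ):ℝ)| ≤ S + 1 := by
          have h1 : cb w' i ≤ cz := le_max_left _ _
          have h2 : cz ≤ cb w' i + 1 := max_le (by omega) hmuz
          have h1' : ((cb w' i : ℕ):ℝ) ≤ ((cz:ℕ):ℝ) := Nat.cast_le.2 h1
          rw [abs_of_nonneg (by linarith)]
          have : ((cz:ℕ):ℝ) ≤ ((cb w' i : ℕ):ℝ) + 1 := by exact_mod_cast h2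
          linarith
        have := assemble hm cz (cb w' i) hΔ haz haw
        exact final_arith hlam hd hS0' hS this
    by_cases hzf : z ∈ Fx i <;> by_cases hwf : w ∈ Fx i
    · -- both fixed
      have e1 : Ψ i z = z := by rw [hΨdef]; exact if_neg (fun hc => hc.2 hzf)
      have e2 : Ψ i w = w := by rw [hΨdef]; exact if_neg (fun hc => hc.2 hwf)
      rw [e1, e2]
      have hK : (1:ℝ) ≤ (3 * (B.lam : ℝ) + 2) * (3 * (B.lam : ℝ) ^ 2 + 6 * (B.lam : ℝ) + 11) := by
        nlinarith
      nlinarith [norm_nonneg (z - w)]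
    · exact key z hz w hw hzf hwf hSle hd1
    · -- z unfixed, w fixed : symmetric
      have hSle' : ‖yv B m w - yv B m z‖ + ‖tau B m w - tau B m z‖ ≤
          (1 + (B.lam:ℝ)^2) * ‖w - z‖ + (2*(B.lam:ℝ)^2 + 4*(B.lam:ℝ) + 2) := by
        rw [norm_sub_rev (yv B m w), norm_sub_rev (tau B m w), norm_sub_rev w]
        exact hSle
      have hd1' : (1:ℝ) ≤ ‖w - z‖ := by rw [norm_sub_rev]; exact hd1
      have h := key w hw z hz hwf hzf hSle' hd1'
      have e1 : ‖Ψ i w - Ψ i z‖ = ‖Ψ i z - Ψ i w‖ := norm_sub_rev _ _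
      have e2 : ‖w - z‖ = ‖z - w‖ := norm_sub_rev _ _
      rw [e1, e2] at h
      exact h
    · -- both unfixed
      have hzD : z ∉ B.D m := fun h => hzf (hD_Fx i h)
      have hwD : w ∉ B.D m := fun h => hwf (hD_Fx i h)
      have hΨz : Ψ i z = Pmap B m z (cb z i) := by rw [hΨdef]; exact if_pos ⟨hz, hzf⟩
      have hΨw : Ψ i w = Pmap B m w (cb w i) := by rw [hΨdef]; exact if_pos ⟨hw, hwf⟩
      rw [hΨz, hΨw]
      have haz : ‖Pmap B m z (cb z i) - Qmap B m z (cb z i)‖ ≤ (B.lam:ℝ) + 2 :=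
        P_near_Q hm hz _
      have haw : ‖Pmap B m w (cb w i) - Qmap B m w (cb w i)‖ ≤ (B.lam:ℝ) + 2 :=
        P_near_Q hm hw _
      have claim : ∀ z' ∈ B.M (m+1), ∀ w' ∈ B.M (m+1), z' ∉ B.D m → w' ∉ B.D m →
          z' ∉ Fx i → w' ∉ Fx i → cb z' i ≤ cb w' i + 1 := by
        intro z' hz' w' hw' hz'D hw'D hz'nf hw'nf
        rcases Nat.eq_zero_or_pos (cb z' i) with h0 | hpos
        · omega
        · have hple := hcb_le z' i
          have hp := P_mem hm hz' hz'D (by omega) hple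
          have hpfix := hcb_mem i z' hz'
          have hpX : Pmap B m z' (cb z' i) ∈ x '' Set.Icc 1 i := by
            rcases hpfix with h | h
            · exact absurd h hp.2
            · exact h
          have h1 := hmuP i hi w' hw' hw'D hw'nf _ hpX
          rwa [P_mu hm hz' (by omega) hple] at h1
      have hc1 : cb z i ≤ cb w i + 1 := claim z hz w hw hzD hwD hzf hwf
      have hc2 : cb w i ≤ cb z i + 1 := claim w hw z hz hwD hzD hwf hzf
      have hΔ : |((cb z i : ℕ):ℝ) - ((cb w i : ℕ):ℝ)| ≤
          ‖yv B m z - yv B m w‖ + ‖tau B m z - tau B m w‖ + 1 := by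
        have habs : |((cb z i : ℕ):ℝ) - ((cb w i : ℕ):ℝ)| ≤ 1 := by
          rw [abs_le]
          constructor
          · have : ((cb w i : ℕ):ℝ) ≤ ((cb z i : ℕ):ℝ) + 1 := by exact_mod_cast hc2
            linarith
          · have : ((cb z i : ℕ):ℝ) ≤ ((cb w i : ℕ):ℝ) + 1 := by exact_mod_cast hc1
            linarith
        linarith
      have := assemble hm (cb z i) (cb w i) hΔ haz haw
      exact final_arith hlam hd1 hS0 hSle this

/-- Proposition 7 (`step3`): for every `n ≥ 2` there are an enumeration
`(x_i)_{i=1}^{i(n)}` of `M_n \ D_{n-1}` and retractions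
`Ψ_{n,i} : M_n → D_{n-1} ∪ {x_1,…,x_i}` (for `0 ≤ i ≤ i(n)-1`) such that
`Ψ_{n,i₁} ∘ Ψ_{n,i₂} = Ψ_{n,min(i₁,i₂)}`, `Ψ_{n,0} = Ψ_n = (r_{n-1}|_{D_{n-1}})⁻¹ ∘ r_{n-1}`
(encoded by `Ψ 0 z ∈ D_{n-1}` and `r_{n-1}(Ψ 0 z) = r_{n-1} z`), and every `Ψ_{n,i}` is
`K`-Lipschitz with `K = (3λ+2)(3λ²+6λ+11)` independent of `i` and `n`. -/
theorem step3_retractions (B : BD Γ) (n : ℕ) (hn : 2 ≤ n) :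
    ∃ (N : ℕ) (x : ℕ → Linf Γ) (Ψ : ℕ → Linf Γ → Linf Γ),
      Set.InjOn x (Set.Icc 1 N) ∧
      x '' Set.Icc 1 N = B.M n \ B.D (n - 1) ∧
      (∀ i, i < N → ∀ z ∈ B.M n, Ψ i z ∈ B.D (n - 1) ∪ x '' Set.Icc 1 i) ∧
      (∀ i, i < N → ∀ z ∈ B.D (n - 1) ∪ x '' Set.Icc 1 i, Ψ i z = z) ∧
      (∀ i₁ i₂, i₁ < N → i₂ < N → ∀ z ∈ B.M n, Ψ i₁ (Ψ i₂ z) = Ψ (min i₁ i₂) z) ∧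
      (∀ z ∈ B.M n, Ψ 0 z ∈ B.D (n - 1) ∧
        restr (B.Γs (n - 1)) (Ψ 0 z) = restr (B.Γs (n - 1)) z) ∧
      (∀ i, i < N → ∀ z ∈ B.M n, ∀ w ∈ B.M n,
        ‖Ψ i z - Ψ i w‖ ≤
          ((3 * (B.lam : ℝ) + 2) * (3 * (B.lam : ℝ) ^ 2 + 6 * (B.lam : ℝ) + 11)) * ‖z - w‖) := by
  exact step3_retractions' B n hn
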